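/- arXiv:0911.1978 — 8 statements merged into one kernel-verified Lean document; each statement's English description precedes it below -/
import Mathlib

section
/- Suppose G is a critically s-chromatic finite simple graph and W is a maximal independent set of G such that χ(G[W]) = s + 1. Then the expansion G[W] is critically (s+1)-chromatic. -/
open SimpleGraph MvPolynomial

/-- The chromatic number of a graph, as a natural number: the least `m` such
that `G` has a proper `m`-coloring. -/
noncomputable def chromNum {V : Type*} (G : SimpleGraph V) : ℕ :=
  sInf {m | G.Colorable m}

/-- `G` is critically `s`-chromatic: `χ(G) = s` and deleting any vertex drops
the chromatic number to `s - 1`. -/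
def CriticallyChromatic {V : Type*} (G : SimpleGraph V) (s : ℕ) : Prop :=
  chromNum G = s ∧ ∀ v : V, chromNum (G.induce {v}ᶜ) = s - 1

/-- The expansion `G[W]` of a graph `G` at a set of vertices `W`: each vertex
`w ∈ W` is replaced by two adjacent copies (`Sum.inl w` and `Sum.inr w`), each
adjacent to (both copies of) the neighbors of `w`. -/
def expansion {V : Type*} (G : SimpleGraph V) (W : Set V) : SimpleGraph (V ⊕ W) :=
  SimpleGraph.fromRel (fun a b =>
    match a, b with
    | Sum.inl u, Sum.inl v => G.Adj u v
    | Sum.inl u, Sum.inr w => G.Adj u (w : V) ∨ u = (w : V)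
    | Sum.inr _, Sum.inl _ => False
    | Sum.inr w, Sum.inr w' => G.Adj (w : V) (w' : V))

/-- The `s`-th expansion `G^s` of `G`: every vertex is replaced by a clique of
size `s` (its shadows), and shadows of adjacent vertices are adjacent. -/
def nExpansion {V : Type*} (G : SimpleGraph V) (s : ℕ) : SimpleGraph (V × Fin s) :=
  SimpleGraph.fromRel (fun a b => G.Adj a.1 b.1 ∨ a.1 = b.1)

/-- `W` is an independent set of `G`. -/
def IsIndepSet {V : Type*} (G : SimpleGraph V) (W : Set V) : Prop :=
  ∀ ⦃u v⦄, u ∈ W → v ∈ W → ¬ G.Adj u v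

/-- `W` is a maximal independent set of `G`. -/
def IsMaxIndepSet {V : Type*} (G : SimpleGraph V) (W : Set V) : Prop :=
  _root_.IsIndepSet G W ∧ ∀ W', _root_.IsIndepSet G W' → W ⊆ W' → W = W'

/-- `W` is a vertex cover of `G`. -/
def IsVertexCover {V : Type*} (G : SimpleGraph V) (W : Set V) : Prop :=
  ∀ ⦃u v⦄, G.Adj u v → u ∈ W ∨ v ∈ W

/-- `W` is a minimal vertex cover of `G`. -/
def IsMinVertexCover {V : Type*} (G : SimpleGraph V) (W : Set V) : Prop :=
  _root_.IsVertexCover G W ∧ ∀ W' ⊆ W, _root_.IsVertexCover G W' → W' = W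

/-- `G` has a `b`-fold coloring using (at most) `d` colors: each vertex gets a
set of `b` colors, adjacent vertices getting disjoint sets. -/
def FoldColorable {V : Type*} (G : SimpleGraph V) (b d : ℕ) : Prop :=
  ∃ f : V → Finset (Fin d), (∀ v, (f v).card = b) ∧
    ∀ ⦃u v⦄, G.Adj u v → Disjoint (f u) (f v)

/-- The `b`-fold chromatic number `χ_b(G)`. -/
noncomputable def foldChromNum {V : Type*} (G : SimpleGraph V) (b : ℕ) : ℕ :=
  sInf {d | FoldColorable G b d}

/-- The fractional chromatic number `χ_f(G) = inf_b χ_b(G)/b`. -/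
noncomputable def fracChromNum {V : Type*} (G : SimpleGraph V) : ℝ :=
  ⨅ b : ℕ+, (foldChromNum G b : ℝ) / (b : ℝ)

/-- The cover ideal `J(G) = ⋂_{{i,j} ∈ E(G)} (x_i, x_j)` of a graph `G` on
`{x_1, …, x_n}`, inside `k[x_1, …, x_n]`. -/
noncomputable def coverIdeal (k : Type*) [Field k] {n : ℕ} (G : SimpleGraph (Fin n)) :
    Ideal (MvPolynomial (Fin n) k) :=
  ⨅ (i : Fin n) (j : Fin n) (_ : G.Adj i j),
    Ideal.span {MvPolynomial.X i, MvPolynomial.X j}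


lemma aux_colorable_nat_card {α : Type*} [Finite α] (G : SimpleGraph α) :
    G.Colorable (Nat.card α) :=
  ⟨SimpleGraph.Coloring.mk (fun a => (Finite.equivFin α) a)
    (fun h heq => h.ne ((Finite.equivFin α).injective heq))⟩

lemma aux_chromNum_colorable {α : Type*} [Finite α] (G : SimpleGraph α) :
    G.Colorable (chromNum G) :=
  Nat.sInf_mem (s := {m | G.Colorable m}) ⟨_, aux_colorable_nat_card G⟩

lemma aux_chromNum_le {α : Type*} (G : SimpleGraph α) {n : ℕ} (h : G.Colorable n) :
    chromNum G ≤ n :=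
  Nat.sInf_le h

lemma aux_delete_plus_one {α : Type*} [Finite α] (G : SimpleGraph α) (x : α) :
    chromNum G ≤ chromNum (G.induce {x}ᶜ) + 1 := by
  classical
  obtain ⟨c⟩ := aux_chromNum_colorable (G.induce {x}ᶜ)
  set n := chromNum (G.induce {x}ᶜ)
  refine aux_chromNum_le G ⟨SimpleGraph.Coloring.mk
    (fun y => if h : y = x then Fin.last n else (c ⟨y, h⟩).castSucc) ?_⟩
  intro y z hadj heq
  by_cases hy : y = x <;> by_cases hz : z = x
  · exact G.irrefl (hy ▸ hz ▸ hadj)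
  · rw [dif_pos hy, dif_neg hz] at heq
    exact (Fin.castSucc_lt_last _).ne heq.symm
  · rw [dif_neg hy, dif_pos hz] at heq
    exact (Fin.castSucc_lt_last _).ne heq
  · rw [dif_neg hy, dif_neg hz] at heq
    exact c.valid (show (G.induce {x}ᶜ).Adj ⟨y, hy⟩ ⟨z, hz⟩ from hadj)
      (Fin.castSucc_injective _ heq)

/-- If `G` is critically `s`-chromatic and `W` is a maximal
independent set with `χ(G[W]) = s + 1`, then `G[W]` is critically
`(s+1)`-chromatic. -/
theorem expansion_at_maxIndep_critical {V : Type} [Fintype V]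
    (G : SimpleGraph V) (s : ℕ) (hG : CriticallyChromatic G s)
    (W : Set V) (hW : IsMaxIndepSet G W)
    (hchi : chromNum (expansion G W) = s + 1) :
    CriticallyChromatic (expansion G W) (s + 1) := by
  classical
  refine ⟨hchi, fun x => ?_⟩
  -- s ≥ 1
  obtain ⟨t, rfl⟩ : ∃ t, s = t + 1 := by
    cases s with
    | zero =>
      exfalso
      have hc := aux_chromNum_colorable G
      rw [hG.1] at hc
      obtain ⟨c0⟩ := hc
      haveI : IsEmpty V := ⟨fun u => (c0 u).elim0⟩
      haveI : IsEmpty (V ⊕ W) := by infer_instance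
      have h0 : chromNum (expansion G W) ≤ 0 :=
        aux_chromNum_le _ ⟨SimpleGraph.Coloring.mk (fun y => isEmptyElim y)
          (fun {a} _ => isEmptyElim a)⟩
      omega
    | succ t => exact ⟨t, rfl⟩
  -- lower bound
  have hge : t + 1 ≤ chromNum ((expansion G W).induce {x}ᶜ) := by
    have := aux_delete_plus_one (expansion G W) x
    rw [hchi] at this
    omega
  -- upper bound
  set v : V := Sum.elim id Subtype.val x with hv
  have hcrit := hG.2 v
  have hc := aux_chromNum_colorable (G.induce {v}ᶜ)
  rw [hcrit] at hc
  obtain ⟨c⟩ := hc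
  have hle : chromNum ((expansion G W).induce {x}ᶜ) ≤ t + 1 := by
    refine aux_chromNum_le _ ⟨SimpleGraph.Coloring.mk
      (fun y => Sum.elim
        (fun u => if h : u = v then Fin.last t else (c ⟨u, h⟩).castSucc)
        (fun _ => Fin.last t) y.val) ?_⟩
    rintro ⟨ya, ha⟩ ⟨yb, hb⟩ hadj heq
    have ha' : ya ≠ x := ha
    have hb' : yb ≠ x := hb
    have hadj' : (expansion G W).Adj ya yb := hadj
    rw [expansion, SimpleGraph.fromRel_adj] at hadj'
    obtain ⟨hne, hrel⟩ := hadj'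
    dsimp only at heq
    -- helper: if inl v survives then x is the inr copy of v
    have hkey : ∀ (w' : W), ¬ (G.Adj v w' ∨ v = (w' : V)) ∨ Sum.inr w' = x →
        True := fun _ _ => trivial
    cases ya with
    | inl u =>
      cases yb with
      | inl u' =>
        have hadjG : G.Adj u u' := by
          rcases hrel with h | h
          · exact h
          · exact h.symm
        by_cases h1 : u = v <;> by_cases h2 : u' = v
        · exact G.irrefl (h1 ▸ h2 ▸ hadjG)
        · rw [Sum.elim_inl, Sum.elim_inl, dif_pos h1, dif_neg h2] at heq
          exact (Fin.castSucc_lt_last _).ne heq.symm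
        · rw [Sum.elim_inl, Sum.elim_inl, dif_neg h1, dif_pos h2] at heq
          exact (Fin.castSucc_lt_last _).ne heq
        · rw [Sum.elim_inl, Sum.elim_inl, dif_neg h1, dif_neg h2] at heq
          exact c.valid (show (G.induce {v}ᶜ).Adj ⟨u, h1⟩ ⟨u', h2⟩ from hadjG)
            (Fin.castSucc_injective _ heq)
      | inr w' =>
        have hrel' : G.Adj u (w' : V) ∨ u = (w' : V) := by
          rcases hrel with h | h
          · exact h
          · exact h.elim
        by_cases h1 : u = v
        · -- then x must be inr ⟨v, _⟩
          subst h1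
          cases hx : x with
          | inl v' =>
            have : v = v' := by rw [hv, hx]; rfl
            exact ha' (by rw [hx, this])
          | inr w0 =>
            have hvw0 : v = (w0 : V) := by rw [hv, hx]; rfl
            have hvW : v ∈ W := hvw0 ▸ w0.2
            rcases hrel' with h | h
            · exact hW.1 hvW w'.2 h
            · have : w' = w0 := Subtype.ext (by rw [← h, hvw0])
              exact hb' (by rw [hx, this])
        · rw [Sum.elim_inl, Sum.elim_inr, dif_neg h1] at heq
          exact (Fin.castSucc_lt_last _).ne heq
    | inr w =>
      cases yb with
      | inl u' =>
        have hrel' : G.Adj u' (w : V) ∨ u' = (w : V) := by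
          rcases hrel with h | h
          · exact h.elim
          · exact h
        by_cases h1 : u' = v
        · subst h1
          cases hx : x with
          | inl v' =>
            have : v = v' := by rw [hv, hx]; rfl
            exact hb' (by rw [hx, this])
          | inr w0 =>
            have hvw0 : v = (w0 : V) := by rw [hv, hx]; rfl
            have hvW : v ∈ W := hvw0 ▸ w0.2
            rcases hrel' with h | h
            · exact hW.1 hvW w.2 h
            · have : w = w0 := Subtype.ext (by rw [← h, hvw0])
              exact ha' (by rw [hx, this])
        · rw [Sum.elim_inl, Sum.elim_inr, dif_neg h1] at heq
          exact (Fin.castSucc_lt_last _).ne heq.symm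
      | inr w' =>
        rcases hrel with h | h
        · exact hW.1 w.2 w'.2 h
        · exact hW.1 w'.2 w.2 h
  have : chromNum ((expansion G W).induce {x}ᶜ) = t + 1 := le_antisymm hle hge
  omega
end

section
/- Let G be a finite simple graph on vertices {x_1,...,x_n} with cover ideal J(G) ⊆ R = k[x_1,...,x_n], let W ⊆ V_G be any subset of vertices, and set G' = G[W], the expansion of G at W. Then for every integer b ≥ 1, the monomial (x_1 ⋯ x_n)^{χ_b(G') − b} / m_W^b belongs to J(G)^{χ_b(G')}, where m_W = ∏_{x_i ∈ W} x_i; that is, the monomial with exponent χ_b(G') − 2b on each variable in W and exponent χ_b(G') − b on each variable not in W lies in J(G)^{χ_b(G')}. -/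
open SimpleGraph MvPolynomial

/-- The monomial of a vertex cover lies in the cover ideal. -/
lemma coverMonomial_mem {k : Type} [Field k] {n : ℕ} (G : SimpleGraph (Fin n))
    (C : Finset (Fin n)) (hC : ∀ ⦃u v⦄, G.Adj u v → u ∈ C ∨ v ∈ C) :
    (∏ i ∈ C, (MvPolynomial.X i : MvPolynomial (Fin n) k)) ∈ coverIdeal k G := by
  simp only [coverIdeal, Ideal.mem_iInf]
  intro i j hij
  rcases hC hij with h | h
  · rw [← Finset.mul_prod_erase _ _ h]
    exact Ideal.mul_mem_right _ _ (Ideal.subset_span (Set.mem_insert _ _))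
  · rw [← Finset.mul_prod_erase _ _ h]
    exact Ideal.mul_mem_right _ _ (Ideal.subset_span (Set.mem_insert_of_mem _ rfl))

/-- A product of `s.card` elements of an ideal lies in its `s.card`-th power. -/
lemma prod_mem_pow_card {R : Type*} [CommRing R] (I : Ideal R) {ι : Type*} (s : Finset ι)
    (g : ι → R) (hg : ∀ i ∈ s, g i ∈ I) : (∏ i ∈ s, g i) ∈ I ^ s.card := by
  induction s using Finset.cons_induction with
  | empty => simp
  | cons a s ha ih =>
    rw [Finset.prod_cons, Finset.card_cons, pow_succ']
    exact Ideal.mul_mem_mul (hg a (Finset.mem_cons_self a s))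
      (ih fun i hi => hg i (Finset.mem_cons_of_mem hi))

/-- For any `W ⊆ V_G` and `b ≥ 1`, setting `G' = G[W]` and
`c = χ_b(G')`, the monomial `(x_1 ⋯ x_n)^{c−b} / m_W^b` — i.e. the monomial
with exponent `c − 2b` on each variable in `W` and exponent `c − b` on each
variable not in `W` — lies in `J(G)^c`. -/
theorem monomial_mem_coverIdeal_pow {k : Type} [Field k] {n : ℕ}
    (G : SimpleGraph (Fin n)) (W : Finset (Fin n)) (b : ℕ) (hb : 1 ≤ b) :
    (∏ i : Fin n, (MvPolynomial.X i : MvPolynomial (Fin n) k) ^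
        (if i ∈ W then foldChromNum (expansion G (W : Set (Fin n))) b - 2 * b
          else foldChromNum (expansion G (W : Set (Fin n))) b - b)) ∈
      (coverIdeal k G) ^ (foldChromNum (expansion G (W : Set (Fin n))) b) := by
  classical
  set c := foldChromNum (expansion G (W : Set (Fin n))) b with hc
  rcases Nat.eq_zero_or_pos c with h0 | hpos
  · rw [h0, pow_zero, Ideal.one_eq_top]
    exact Submodule.mem_top
  -- the set of feasible numbers of colors is nonempty, so `c` is achieved
  have hS : {d | FoldColorable (expansion G (W : Set (Fin n))) b d}.Nonempty := by
    by_contra h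
    rw [Set.not_nonempty_iff_eq_empty] at h
    have : c = 0 := by rw [hc, foldChromNum, h, Nat.sInf_empty]
    omega
  have hmem : FoldColorable (expansion G (W : Set (Fin n))) b c := Nat.sInf_mem hS
  obtain ⟨f, hcardf, hdisj⟩ := hmem
  -- adjacency facts in the expansion
  have adj_ll : ∀ {u v : Fin n}, G.Adj u v →
      (expansion G (W : Set (Fin n))).Adj (Sum.inl u) (Sum.inl v) := by
    intro u v h
    simp only [expansion, fromRel_adj]
    exact ⟨by simpa using h.ne, Or.inl h⟩
  have adj_lr : ∀ {u v : Fin n}, G.Adj u v → ∀ (hv : v ∈ W),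
      (expansion G (W : Set (Fin n))).Adj (Sum.inl u) (Sum.inr ⟨v, Finset.mem_coe.mpr hv⟩) := by
    intro u v h hv
    simp only [expansion, fromRel_adj]
    exact ⟨by simp, Or.inl (Or.inl h)⟩
  have adj_rl : ∀ {u v : Fin n}, G.Adj u v → ∀ (hu : u ∈ W),
      (expansion G (W : Set (Fin n))).Adj (Sum.inr ⟨u, Finset.mem_coe.mpr hu⟩) (Sum.inl v) := by
    intro u v h hu
    simp only [expansion, fromRel_adj]
    exact ⟨by simp, Or.inr (Or.inl h.symm)⟩
  have adj_rr : ∀ {u v : Fin n}, G.Adj u v → ∀ (hu : u ∈ W) (hv : v ∈ W),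
      (expansion G (W : Set (Fin n))).Adj (Sum.inr ⟨u, Finset.mem_coe.mpr hu⟩)
        (Sum.inr ⟨v, Finset.mem_coe.mpr hv⟩) := by
    intro u v h hu hv
    simp only [expansion, fromRel_adj]
    refine ⟨?_, Or.inl h⟩
    simp only [ne_eq, Sum.inr.injEq, Subtype.mk.injEq]
    exact h.ne
  have adj_self : ∀ {v : Fin n} (hv : v ∈ W),
      (expansion G (W : Set (Fin n))).Adj (Sum.inl v) (Sum.inr ⟨v, Finset.mem_coe.mpr hv⟩) := by
    intro v hv
    simp only [expansion, fromRel_adj]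
    exact ⟨by simp, Or.inl (Or.inr (by simp))⟩
  have key : ∀ {a b' : (Fin n) ⊕ (W : Set (Fin n))},
      (expansion G (W : Set (Fin n))).Adj a b' → ∀ {t}, t ∈ f a → t ∈ f b' → False :=
    fun hadj _ h1 h2 => Finset.disjoint_left.mp (hdisj hadj) h1 h2
  -- for each color `t`, the vertices all of whose shadows avoid `t`
  set C : Fin c → Finset (Fin n) := fun t =>
    Finset.univ.filter (fun v => t ∉ f (Sum.inl v) ∧
      ∀ h : v ∈ W, t ∉ f (Sum.inr ⟨v, Finset.mem_coe.mpr h⟩)) with hCdef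
  -- each `C t` is a vertex cover of `G`
  have hcover : ∀ t : Fin c, ∀ ⦃u v⦄, G.Adj u v → u ∈ C t ∨ v ∈ C t := by
    intro t u v huv
    by_contra hcon
    push_neg at hcon
    obtain ⟨hu, hv⟩ := hcon
    have hu' : t ∈ f (Sum.inl u) ∨ ∃ h : u ∈ W, t ∈ f (Sum.inr ⟨u, Finset.mem_coe.mpr h⟩) := by
      by_contra h
      push_neg at h
      refine hu ?_
      simp only [hCdef, Finset.mem_filter, Finset.mem_univ, true_and]
      exact ⟨h.1, fun hw => h.2 hw⟩
    have hv' : t ∈ f (Sum.inl v) ∨ ∃ h : v ∈ W, t ∈ f (Sum.inr ⟨v, Finset.mem_coe.mpr h⟩) := by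
      by_contra h
      push_neg at h
      refine hv ?_
      simp only [hCdef, Finset.mem_filter, Finset.mem_univ, true_and]
      exact ⟨h.1, fun hw => h.2 hw⟩
    rcases hu' with h1 | ⟨hw1, h1⟩ <;> rcases hv' with h2 | ⟨hw2, h2⟩
    · exact key (adj_ll huv) h1 h2
    · exact key (adj_lr huv hw2) h1 h2
    · exact key (adj_rl huv hw1) h1 h2
    · exact key (adj_rr huv hw1 hw2) h1 h2
  -- multiplicity bound for each vertex
  have hle : ∀ v : Fin n, (Finset.univ.filter (fun t : Fin c => v ∈ C t)).card ≤
      (if v ∈ W then c - 2 * b else c - b) := by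
    intro v
    by_cases hvW : v ∈ W
    · rw [if_pos hvW]
      have hsub : Finset.univ.filter (fun t : Fin c => v ∈ C t) ⊆
          (f (Sum.inl v) ∪ f (Sum.inr ⟨v, Finset.mem_coe.mpr hvW⟩))ᶜ := by
        intro t ht
        simp only [hCdef, Finset.mem_filter, Finset.mem_univ, true_and] at ht
        simp only [Finset.mem_compl, Finset.mem_union]
        push_neg
        exact ⟨ht.1, ht.2 hvW⟩
      refine le_trans (Finset.card_le_card hsub) ?_
      rw [Finset.card_compl,
        Finset.card_union_of_disjoint (hdisj (adj_self hvW)), hcardf, hcardf]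
      simp [two_mul]
    · rw [if_neg hvW]
      have hsub : Finset.univ.filter (fun t : Fin c => v ∈ C t) ⊆ (f (Sum.inl v))ᶜ := by
        intro t ht
        simp only [hCdef, Finset.mem_filter, Finset.mem_univ, true_and] at ht
        simp only [Finset.mem_compl]
        exact ht.1
      refine le_trans (Finset.card_le_card hsub) ?_
      rw [Finset.card_compl, hcardf]
      simp
  -- the product of the cover monomials
  have hbig : (∏ t : Fin c, ∏ v ∈ C t, (MvPolynomial.X v : MvPolynomial (Fin n) k)) ∈
      (coverIdeal k G) ^ c := by
    have := prod_mem_pow_card (coverIdeal k G) Finset.univ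
      (fun t => ∏ v ∈ C t, (MvPolynomial.X v : MvPolynomial (Fin n) k))
      (fun t _ => coverMonomial_mem G (C t) (hcover t))
    simpa [Finset.card_univ] using this
  -- rewrite the product of cover monomials by exponents
  have hprod : (∏ t : Fin c, ∏ v ∈ C t, (MvPolynomial.X v : MvPolynomial (Fin n) k)) =
      ∏ v : Fin n, (MvPolynomial.X v : MvPolynomial (Fin n) k) ^
        (Finset.univ.filter (fun t : Fin c => v ∈ C t)).card := by
    have h1 : ∀ t : Fin c, (∏ v ∈ C t, (MvPolynomial.X v : MvPolynomial (Fin n) k)) =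
        ∏ v : Fin n, (if v ∈ C t then (MvPolynomial.X v : MvPolynomial (Fin n) k) else 1) := by
      intro t
      rw [Finset.prod_ite_mem, Finset.univ_inter]
    rw [Finset.prod_congr rfl fun t _ => h1 t, Finset.prod_comm]
    refine Finset.prod_congr rfl fun v _ => ?_
    rw [Finset.prod_ite, Finset.prod_const, Finset.prod_const_one, mul_one]
  rw [hprod] at hbig
  -- the target monomial is a multiple of the product of cover monomials
  have hfactor : (∏ i : Fin n, (MvPolynomial.X i : MvPolynomial (Fin n) k) ^
        (if i ∈ W then c - 2 * b else c - b)) =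
      (∏ v : Fin n, (MvPolynomial.X v : MvPolynomial (Fin n) k) ^
        (Finset.univ.filter (fun t : Fin c => v ∈ C t)).card) *
      ∏ v : Fin n, (MvPolynomial.X v : MvPolynomial (Fin n) k) ^
        ((if v ∈ W then c - 2 * b else c - b) -
          (Finset.univ.filter (fun t : Fin c => v ∈ C t)).card) := by
    rw [← Finset.prod_mul_distrib]
    refine Finset.prod_congr rfl fun v _ => ?_
    rw [← pow_add, Nat.add_sub_cancel' (hle v)]
  rw [hfactor]
  exact Ideal.mul_mem_right _ _ hbig
end

section
/- Suppose G is a critically s-chromatic finite simple graph and W is an independent set of G that is not maximal, i.e., there exists a vertex x ∉ W such that W ∪ {x} is an independent set. Then the expansion G[W] satisfies χ(G[W]) = s. -/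
open SimpleGraph MvPolynomial

/-- If `G` is critically `s`-chromatic and `W` is an
independent set that is not maximal, then `χ(G[W]) = s`. -/
theorem expansion_at_nonmaximal_indep {V : Type} [Fintype V]
    (G : SimpleGraph V) (s : ℕ) (hG : CriticallyChromatic G s)
    (W : Set V) (hW : _root_.IsIndepSet G W)
    (hnonmax : ∃ x : V, x ∉ W ∧ _root_.IsIndepSet G (W ∪ {x})) :
    chromNum (expansion G W) = s := by
  classical
  obtain ⟨x, hxW, hx⟩ := hnonmax
  obtain ⟨hchrom, hcrit⟩ := hG
  have hGcol : G.Colorable (Fintype.card V) := G.colorable_of_fintype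
  have hGs : G.Colorable s := by
    rw [← hchrom]
    exact Nat.sInf_mem (⟨_, hGcol⟩ : {m | G.Colorable m}.Nonempty)
  have hs0 : s ≠ 0 := by
    rintro rfl
    obtain ⟨C⟩ := hGs
    exact (C x).elim0
  obtain ⟨n, rfl⟩ := Nat.exists_eq_succ_of_ne_zero hs0
  -- a proper n-coloring of G minus x
  have hindcol : (G.induce ({x}ᶜ : Set V)).Colorable n := by
    have h1 : (G.induce ({x}ᶜ : Set V)).Colorable (Fintype.card ({x}ᶜ : Set V)) :=
      SimpleGraph.colorable_of_fintype _
    have h2 := Nat.sInf_mem (⟨_, h1⟩ : {m | (G.induce ({x}ᶜ : Set V)).Colorable m}.Nonempty)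
    have h3 : sInf {m | (G.induce ({x}ᶜ : Set V)).Colorable m} = n := by
      have := hcrit x
      simpa [chromNum] using this
    rwa [h3] at h2
  obtain ⟨c0⟩ := hindcol
  -- extend to an (n+1)-coloring of G where x alone gets the last color among
  -- x, W, and neighbors of W
  set c : V → Fin (n + 1) := fun v =>
    if h : v = x then Fin.last n else (c0 ⟨v, h⟩).castSucc with hc
  have hcx : ∀ v, v ≠ x → c v ≠ Fin.last n := by
    intro v hv
    simp only [hc, dif_neg hv]
    exact (Fin.castSucc_lt_last _).ne
  have hcadj : ∀ u v, G.Adj u v → c u ≠ c v := by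
    intro u v huv
    by_cases hu : u = x <;> by_cases hv : v = x
    · subst hu; subst hv; exact absurd huv (G.irrefl)
    · subst hu
      simp only [hc, dif_pos rfl, dif_neg hv]
      exact fun h => (Fin.castSucc_lt_last (c0 ⟨v, hv⟩)).ne h.symm
    · subst hv
      simp only [hc, dif_pos rfl, dif_neg hu]
      exact (Fin.castSucc_lt_last _).ne
    · simp only [hc, dif_neg hu, dif_neg hv]
      intro h
      have hadj : (G.induce ({x}ᶜ : Set V)).Adj ⟨u, hu⟩ ⟨v, hv⟩ := by
        simpa using huv
      exact c0.valid hadj (by exact_mod_cast Fin.castSucc_injective n h)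
  have hxadj : ∀ w ∈ W, ¬ G.Adj x w := by
    intro w hw
    exact hx (Set.mem_union_right _ rfl) (Set.mem_union_left _ hw)
  -- coloring of the expansion
  have hexp : (expansion G W).Colorable (n + 1) := by
    refine ⟨SimpleGraph.Coloring.mk
      (fun a => match a with
        | Sum.inl v => c v
        | Sum.inr _ => Fin.last n) ?_⟩
    rintro (u | w) (v | w') hab <;>
      rw [expansion, SimpleGraph.fromRel_adj] at hab
    · rcases hab.2 with h | h
      · exact hcadj u v h
      · exact fun he => hcadj v u h he.symm
    · rcases hab.2 with (h | h) | h
      · exact hcx u (fun he => hxadj w' w'.2 (he ▸ h))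
      · exact hcx u (fun he => hxW (by rw [← he, h]; exact w'.2))
      · exact h.elim
    · rcases hab.2 with h | (h | h)
      · exact h.elim
      · exact fun he => hcx v (fun hv => hxadj w w.2 (hv ▸ h)) he.symm
      · exact fun he => hcx v (fun hv => hxW (hv ▸ h ▸ w.2)) he.symm
    · rcases hab.2 with h | h
      · exact absurd h (hW w.2 w'.2)
      · exact absurd h (hW w'.2 w.2)
  -- every coloring of the expansion restricts to a coloring of G
  have hlow : ∀ m, (expansion G W).Colorable m → G.Colorable m := by
    intro m ⟨C⟩
    refine ⟨SimpleGraph.Coloring.mk (fun v => C (Sum.inl v)) ?_⟩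
    intro u v huv
    refine C.valid ?_
    rw [expansion, SimpleGraph.fromRel_adj]
    exact ⟨by simp [huv.ne], Or.inl huv⟩
  refine le_antisymm (Nat.sInf_le hexp) ?_
  refine le_csInf ⟨_, hexp⟩ ?_
  intro m hm
  have : G.Colorable m := hlow m hm
  calc n + 1 = chromNum G := hchrom.symm
    _ ≤ m := Nat.sInf_le this
end

section
/- Let G = C_{2n+1} be the odd cycle on 2n+1 vertices with n ≥ 1 (a critically 3-chromatic graph). Then there exists a subset W ⊆ V_G such that the expansion G[W] is a critically 4-chromatic graph. -/
open SimpleGraph MvPolynomial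

section AuxOddCyc
open SimpleGraph

lemma OddCycAux.modlem (a N : ℕ) (h : a < 2*N) :
    a % N = if a < N then a else a - N := by
  split_ifs with h1
  · exact Nat.mod_eq_of_lt h1
  · rw [Nat.mod_eq_sub_mod (by omega), Nat.mod_eq_of_lt (by omega)]

namespace OddCyc

lemma modlem (a N : ℕ) (h : a < 2*N) :
    a % N = if a < N then a else a - N := by
  split_ifs with h1
  · exact Nat.mod_eq_of_lt h1
  · rw [Nat.mod_eq_sub_mod (by omega), Nat.mod_eq_of_lt (by omega)]

lemma cyc_adj {n : ℕ} (hn : 1 ≤ n) (u v : Fin (2*n+1)) :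
    (cycleGraph (2*n+1)).Adj u v ↔
      (u.val+1 = v.val ∨ v.val+1 = u.val ∨ (u.val = 0 ∧ v.val = 2*n) ∨ (v.val = 0 ∧ u.val = 2*n)) := by
  have hu := u.isLt
  have hv := v.isLt
  rw [cycleGraph_adj', Fin.sub_def, Fin.sub_def]
  simp only [Fin.val_mk]
  rw [OddCycAux.modlem _ _ (by omega), OddCycAux.modlem _ _ (by omega)]
  constructor
  · intro h
    split_ifs at h
    · omega
    · omega
    · omega
    · omega
  · intro h
    split_ifs
    · omega
    · omega
    · omega
    · omega

variable {n : ℕ}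

def Wset (n : ℕ) : Set (Fin (2*n+1)) := {v | v.val % 2 = 0 ∧ v.val ≠ 2*n}

abbrev EG (n : ℕ) := expansion (cycleGraph (2*n+1)) (Wset n)

lemma adj_ll {u v : Fin (2*n+1)} :
    (EG n).Adj (Sum.inl u) (Sum.inl v) ↔ (cycleGraph (2*n+1)).Adj u v := by
  simp only [EG, expansion, fromRel_adj, ne_eq, Sum.inl.injEq]
  constructor
  · rintro ⟨h1, h2 | h2⟩
    · exact h2
    · exact h2.symm
  · intro h; exact ⟨h.ne, Or.inl h⟩

lemma adj_lr {u : Fin (2*n+1)} {w : Wset n} :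
    (EG n).Adj (Sum.inl u) (Sum.inr w) ↔ ((cycleGraph (2*n+1)).Adj u w ∨ u = (w : Fin (2*n+1))) := by
  simp only [EG, expansion, fromRel_adj, ne_eq]
  constructor
  · rintro ⟨h1, h2 | h2⟩
    · exact h2
    · exact h2.elim
  · intro h; exact ⟨by simp, Or.inl h⟩

lemma adj_rr {w w' : Wset n} :
    (EG n).Adj (Sum.inr w) (Sum.inr w') ↔ (cycleGraph (2*n+1)).Adj w w' := by
  simp only [EG, expansion, fromRel_adj, ne_eq, Sum.inr.injEq]
  constructor
  · rintro ⟨h1, h2 | h2⟩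
    · exact h2
    · exact h2.symm
  · intro h
    refine ⟨fun hh => h.ne (by exact_mod_cast congrArg Subtype.val hh), Or.inl h⟩

end OddCyc

lemma chromNum_eq_of {V : Type*} {H : SimpleGraph V} {k : ℕ}
    (h1 : H.Colorable k) (h2 : ¬ H.Colorable (k-1)) : chromNum H = k := by
  unfold chromNum
  have hk : k ∈ {m | H.Colorable m} := h1
  refine le_antisymm (Nat.sInf_le hk) ?_
  by_contra h
  push_neg at h
  have hmem := Nat.sInf_mem (⟨k, hk⟩ : Set.Nonempty {m | H.Colorable m})
  exact h2 (Colorable.mono (by omega) hmem)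

lemma triangle_not_col2 {V : Type*} {H : SimpleGraph V} {a b c : V}
    (hab : H.Adj a b) (hac : H.Adj a c) (hbc : H.Adj b c) : ¬ H.Colorable 2 := by
  rintro ⟨C⟩
  have key : ∀ x y z : Fin 2, x ≠ y → x ≠ z → y ≠ z → False := by decide
  exact key _ _ _ (C.valid hab) (C.valid hac) (C.valid hbc)

lemma pigeon3 : ∀ p q x y : Fin 3, p ≠ q → x ≠ p → x ≠ q → y ≠ p → y ≠ q → x = y := by decide

lemma colorable_of_nat {V : Type*} {H : SimpleGraph V} {m : ℕ} (f : V → ℕ) (hb : ∀ v, f v < m)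
    (hv : ∀ a b, H.Adj a b → f a ≠ f b) : H.Colorable m := by
  rw [SimpleGraph.colorable_iff_exists_bdd_nat_coloring]
  exact ⟨SimpleGraph.Coloring.mk f (fun h => hv _ _ h), hb⟩

namespace OddCyc

variable {n : ℕ}

lemma col4 (hn : 1 ≤ n) : (EG n).Colorable 4 := by
  refine colorable_of_nat (fun a => match a with
    | Sum.inl u => if u.val = 2*n then 3 else if u.val % 2 = 0 then 0 else 2
    | Sum.inr _ => 1) ?_ ?_
  · rintro (u | w)
    · simp only
      split_ifs <;> omega
    · exact Nat.one_lt_two.trans (by norm_num)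
  · rintro (u | w) (v | w')
    · intro h
      rw [adj_ll, cyc_adj hn] at h
      have hu := u.isLt; have hv := v.isLt
      simp only
      split_ifs <;> omega
    · intro h
      rw [adj_lr] at h
      have hw := w'.2
      simp only [Wset, Set.mem_setOf_eq] at hw
      simp only
      split_ifs <;> omega
    · intro h
      have h' := (adj_lr.mp h.symm)
      have hw := w.2
      simp only [Wset, Set.mem_setOf_eq] at hw
      simp only
      split_ifs <;> omega
    · intro h
      rw [adj_rr, cyc_adj hn] at h
      have hw := w.2; have hw' := w'.2
      simp only [Wset, Set.mem_setOf_eq] at hw hw'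
      have h1 := (w : Fin (2*n+1)).isLt; have h2 := (w' : Fin (2*n+1)).isLt
      omega

end OddCyc

namespace OddCyc
variable {n : ℕ}

lemma not_col3 (hn : 1 ≤ n) : ¬ (EG n).Colorable 3 := by
  rintro ⟨c⟩
  have hmem : ∀ (m : ℕ) (hm : m < n), (⟨2*m, by omega⟩ : Fin (2*n+1)) ∈ Wset n := by
    intro m hm
    simp only [Wset, Set.mem_setOf_eq, Fin.val_mk]
    omega
  have pairKey : ∀ (m : ℕ) (hm : m < n) (u v : Fin (2*n+1)),
      (cycleGraph (2*n+1)).Adj u ⟨2*m, by omega⟩ →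
      (cycleGraph (2*n+1)).Adj v ⟨2*m, by omega⟩ →
      c (Sum.inl u) = c (Sum.inl v) := by
    intro m hm u v hu hv
    set w : Wset n := ⟨⟨2*m, by omega⟩, hmem m hm⟩ with hw
    have h1 : (EG n).Adj (Sum.inl ⟨2*m, by omega⟩) (Sum.inr w) := adj_lr.mpr (Or.inr rfl)
    have h2 : (EG n).Adj (Sum.inl u) (Sum.inr w) := adj_lr.mpr (Or.inl hu)
    have h3 : (EG n).Adj (Sum.inl v) (Sum.inr w) := adj_lr.mpr (Or.inl hv)
    exact pigeon3 (c (Sum.inl ⟨2*m, by omega⟩)) (c (Sum.inr w)) _ _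
      (c.valid h1) (c.valid (adj_ll.mpr hu)) (c.valid h2)
      (c.valid (adj_ll.mpr hv)) (c.valid h3)
  have chain : ∀ (i : ℕ) (hi : i < n), c (Sum.inl ⟨2*i+1, by omega⟩) = c (Sum.inl ⟨1, by omega⟩) := by
    intro i
    induction i with
    | zero =>
      intro _
      have : (⟨2*0+1, by omega⟩ : Fin (2*n+1)) = ⟨1, by omega⟩ := by
        apply Fin.ext; simp
      rw [this]
    | succ i ih =>
      intro h
      have a1 : (cycleGraph (2*n+1)).Adj ⟨2*i+1, by omega⟩ ⟨2*(i+1), by omega⟩ := by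
        rw [cyc_adj hn]; simp only [Fin.val_mk]; first | tauto | omega
      have a2 : (cycleGraph (2*n+1)).Adj ⟨2*(i+1)+1, by omega⟩ ⟨2*(i+1), by omega⟩ := by
        rw [cyc_adj hn]; simp only [Fin.val_mk]; first | tauto | omega
      have e1 := pairKey (i+1) h _ _ a2 a1
      rw [e1]
      exact ih (by omega)
  have a1 : (cycleGraph (2*n+1)).Adj ⟨1, by omega⟩ ⟨2*0, by omega⟩ := by
    rw [cyc_adj hn]; simp only [Fin.val_mk]; first | tauto | omega
  have a2 : (cycleGraph (2*n+1)).Adj ⟨2*n, by omega⟩ ⟨2*0, by omega⟩ := by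
    rw [cyc_adj hn]; simp only [Fin.val_mk]; first | tauto | omega
  have e0 : c (Sum.inl ⟨1, by omega⟩) = c (Sum.inl ⟨2*n, by omega⟩) := pairKey 0 hn _ _ a1 a2
  have efin := chain (n-1) (by omega)
  have afin : (cycleGraph (2*n+1)).Adj ⟨2*(n-1)+1, by omega⟩ ⟨2*n, by omega⟩ := by
    rw [cyc_adj hn]; simp only [Fin.val_mk]; first | tauto | omega
  have hne := c.valid (adj_ll.mpr afin)
  rw [efin, e0] at hne
  exact hne rfl

end OddCyc

namespace OddCyc
variable {n : ℕ}

def colf (n t : ℕ) : (Fin (2*n+1) ⊕ (Wset n)) → ℕ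
  | Sum.inl u => if u.val = 2*n then 2 else if u.val % 2 = 0 then 0 else if u.val < t then 2 else 1
  | Sum.inr w => if (w : Fin (2*n+1)).val < t then 1
      else if (w : Fin (2*n+1)).val = t then 0 else 2

lemma colf_lt (t : ℕ) (a : Fin (2*n+1) ⊕ (Wset n)) : colf n t a < 3 := by
  rcases a with u | w <;> simp only [colf] <;> split_ifs <;> omega

lemma master (hn : 1 ≤ n) (t : ℕ) (a b : Fin (2*n+1) ⊕ (Wset n))
    (hadj : (EG n).Adj a b) (heq : colf n t a = colf n t b) :
    (∃ u : Fin (2*n+1), (a = Sum.inl u ∨ b = Sum.inl u) ∧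
        ((u.val = t ∧ t % 2 = 1) ∨ (u.val = 2*n ∧ 2*n ≤ t))) ∨
    (∃ w : Wset n, ((a = Sum.inl (w : Fin (2*n+1)) ∧ b = Sum.inr w) ∨
        (a = Sum.inr w ∧ b = Sum.inl (w : Fin (2*n+1)))) ∧ (w : Fin (2*n+1)).val = t) := by
  rcases a with u | w <;> rcases b with v | w'
  · rw [adj_ll, cyc_adj hn] at hadj
    have hu := u.isLt; have hv := v.isLt
    simp only [colf] at heq
    split_ifs at heq <;>
      first
        | omega
        | exact Or.inl ⟨u, Or.inl rfl, Or.inr ⟨by omega, by omega⟩⟩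
        | exact Or.inl ⟨v, Or.inr rfl, Or.inr ⟨by omega, by omega⟩⟩
  · rw [adj_lr] at hadj
    have hu := u.isLt
    obtain ⟨hw1, hw2⟩ := w'.2
    have hw3 := (w' : Fin (2*n+1)).isLt
    rcases hadj with hadj | h
    · rw [cyc_adj hn] at hadj
      simp only [colf] at heq
      split_ifs at heq <;>
        first
          | omega
          | exact Or.inl ⟨u, Or.inl rfl, Or.inl ⟨by omega, by omega⟩⟩
    · have h' : u.val = (w' : Fin (2*n+1)).val := by rw [h]
      simp only [colf] at heq
      split_ifs at heq <;>
        first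
          | omega
          | exact Or.inr ⟨w', Or.inl ⟨by rw [h], rfl⟩, by omega⟩
  · rw [adj_comm, adj_lr] at hadj
    have hv := v.isLt
    obtain ⟨hw1, hw2⟩ := w.2
    have hw3 := (w : Fin (2*n+1)).isLt
    rcases hadj with hadj | h
    · rw [cyc_adj hn] at hadj
      simp only [colf] at heq
      split_ifs at heq <;>
        first
          | omega
          | exact Or.inl ⟨v, Or.inr rfl, Or.inl ⟨by omega, by omega⟩⟩
    · have h' : v.val = (w : Fin (2*n+1)).val := by rw [h]
      simp only [colf] at heq
      split_ifs at heq <;>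
        first
          | omega
          | exact Or.inr ⟨w, Or.inr ⟨rfl, by rw [h]⟩, by omega⟩
  · rw [adj_rr, cyc_adj hn] at hadj
    obtain ⟨hw1, hw2⟩ := w.2
    obtain ⟨hw1', hw2'⟩ := w'.2
    have h3 := (w : Fin (2*n+1)).isLt
    have h3' := (w' : Fin (2*n+1)).isLt
    omega

end OddCyc

namespace OddCyc
variable {n : ℕ}

lemma del_col3_aux (hn : 1 ≤ n) (t : ℕ) (x : Fin (2*n+1) ⊕ (Wset n))
    (hx1 : ∀ u : Fin (2*n+1),
      ((u.val = t ∧ t % 2 = 1) ∨ (u.val = 2*n ∧ 2*n ≤ t)) → Sum.inl u = x)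
    (hx2 : ∀ w : Wset n, (w : Fin (2*n+1)).val = t →
      (Sum.inl (w : Fin (2*n+1)) = x ∨ Sum.inr w = x)) :
    ((EG n).induce {x}ᶜ).Colorable 3 := by
  apply colorable_of_nat (fun a => colf n t a.1) (fun a => colf_lt t a.1)
  rintro ⟨a, ha⟩ ⟨b, hb⟩ hadj heq
  have ha' : a ≠ x := ha
  have hb' : b ≠ x := hb
  have hadj' : (EG n).Adj a b := hadj
  rcases master hn t a b hadj' heq with ⟨u, hor, hc⟩ | ⟨w, hor, hwt⟩
  · have := hx1 u hc
    rcases hor with h | h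
    · exact ha' (h.trans this)
    · exact hb' (h.trans this)
  · rcases hx2 w hwt with h | h <;> rcases hor with ⟨h1, h2⟩ | ⟨h1, h2⟩
    · exact ha' (h1.trans h)
    · exact hb' (h2.trans h)
    · exact hb' (h2.trans h)
    · exact ha' (h1.trans h)

lemma del_col3 (hn : 1 ≤ n) (x : Fin (2*n+1) ⊕ (Wset n)) :
    ((EG n).induce {x}ᶜ).Colorable 3 := by
  rcases x with v | w0
  · have hv := v.isLt
    by_cases hv2 : v.val = 2*n
    · apply del_col3_aux hn (2*n+1)
      · intro u hu
        have hu' := u.isLt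
        have : u = v := Fin.ext (by omega)
        rw [this]
      · intro w hw
        have := (w : Fin (2*n+1)).isLt
        omega
    · apply del_col3_aux hn v.val
      · intro u hu
        have hu' := u.isLt
        have : u = v := Fin.ext (by omega)
        rw [this]
      · intro w hw
        left
        congr 1
        exact Fin.ext hw
  · obtain ⟨hw1, hw2⟩ := w0.2
    have hw3 := (w0 : Fin (2*n+1)).isLt
    apply del_col3_aux hn (w0 : Fin (2*n+1)).val
    · intro u hu
      exact absurd hu (by omega)
    · intro w hw
      right
      congr 1
      exact Subtype.ext (Fin.ext hw)

end OddCyc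

namespace OddCyc
variable {n : ℕ}

lemma del_not_col2 (hn : 1 ≤ n) (x : Fin (2*n+1) ⊕ (Wset n)) :
    ¬ ((EG n).induce {x}ᶜ).Colorable 2 := by
  have tri : ∀ (p q r : Fin (2*n+1) ⊕ (Wset n)),
      (EG n).Adj p q → (EG n).Adj p r → (EG n).Adj q r →
      p ≠ x → q ≠ x → r ≠ x → ¬ ((EG n).induce {x}ᶜ).Colorable 2 := by
    intro p q r h1 h2 h3 hp hq hr
    exact triangle_not_col2
      (a := (⟨p, by simpa using hp⟩ : ({x}ᶜ : Set (Fin (2*n+1) ⊕ (Wset n)))))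
      (b := ⟨q, by simpa using hq⟩) (c := ⟨r, by simpa using hr⟩) h1 h2 h3
  let w0 : Wset n := ⟨⟨0, by omega⟩, by
    refine ⟨?_, ?_⟩ <;> simp only [Fin.val_mk] <;> omega⟩
  have hval0 : (w0 : Fin (2*n+1)).val = 0 := rfl
  have a01 : (EG n).Adj (Sum.inl ⟨0, by omega⟩) (Sum.inl ⟨1, by omega⟩) := by
    rw [adj_ll, cyc_adj hn]; simp only [Fin.val_mk]; first | tauto | omega
  have a0r : (EG n).Adj (Sum.inl ⟨0, by omega⟩) (Sum.inr w0) := by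
    refine adj_lr.mpr (Or.inr ?_)
    apply Fin.ext; rw [hval0]
  have a1r : (EG n).Adj (Sum.inl ⟨1, by omega⟩) (Sum.inr w0) := by
    refine adj_lr.mpr (Or.inl ?_)
    rw [cyc_adj hn]; simp only [Fin.val_mk, hval0]; first | tauto | omega
  by_cases hx : x = Sum.inl ⟨0, by omega⟩ ∨ x = Sum.inr w0 ∨ x = Sum.inl ⟨1, by omega⟩
  · rcases Nat.lt_or_ge n 2 with h2 | h2
    · -- n = 1
      obtain rfl : n = 1 := by omega
      have a02 : (EG 1).Adj (Sum.inl ⟨0, by omega⟩) (Sum.inl ⟨2, by omega⟩) := by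
        rw [adj_ll, cyc_adj hn]; simp only [Fin.val_mk]; first | tauto | omega
      have a12 : (EG 1).Adj (Sum.inl ⟨1, by omega⟩) (Sum.inl ⟨2, by omega⟩) := by
        rw [adj_ll, cyc_adj hn]; simp only [Fin.val_mk]; first | tauto | omega
      have a2r : (EG 1).Adj (Sum.inl ⟨2, by omega⟩) (Sum.inr w0) := by
        refine adj_lr.mpr (Or.inl ?_)
        rw [cyc_adj hn]; simp only [Fin.val_mk, hval0]; first | tauto | omega
      rcases hx with rfl | rfl | rfl
      · exact tri (Sum.inl ⟨1, by omega⟩) (Sum.inr w0) (Sum.inl ⟨2, by omega⟩)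
          a1r a12 a2r.symm
          (by simp [Fin.ext_iff]) (by simp) (by simp [Fin.ext_iff])
      · exact tri (Sum.inl ⟨0, by omega⟩) (Sum.inl ⟨1, by omega⟩) (Sum.inl ⟨2, by omega⟩)
          a01 a02 a12 (by simp) (by simp) (by simp)
      · exact tri (Sum.inl ⟨0, by omega⟩) (Sum.inr w0) (Sum.inl ⟨2, by omega⟩)
          a0r a02 a2r.symm
          (by simp [Fin.ext_iff]) (by simp) (by simp [Fin.ext_iff])
    · -- n ≥ 2
      let w1 : Wset n := ⟨⟨2, by omega⟩, by
        refine ⟨?_, ?_⟩ <;> simp only [Fin.val_mk] <;> omega⟩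
      have hval1 : (w1 : Fin (2*n+1)).val = 2 := rfl
      have a23 : (EG n).Adj (Sum.inl ⟨2, by omega⟩) (Sum.inl ⟨3, by omega⟩) := by
        rw [adj_ll, cyc_adj hn]; simp only [Fin.val_mk]; first | tauto | omega
      have a2r : (EG n).Adj (Sum.inl ⟨2, by omega⟩) (Sum.inr w1) := by
        refine adj_lr.mpr (Or.inr ?_)
        apply Fin.ext; rw [hval1]
      have a3r : (EG n).Adj (Sum.inl ⟨3, by omega⟩) (Sum.inr w1) := by
        refine adj_lr.mpr (Or.inl ?_)
        rw [cyc_adj hn]; simp only [Fin.val_mk, hval1]; first | tauto | omega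
      have hww : w1 ≠ w0 := by
        intro h
        have h' := congrArg (fun z : Wset n => (z : Fin (2*n+1)).val) h
        simp only [hval0, hval1] at h'
        omega
      rcases hx with rfl | rfl | rfl
      · exact tri (Sum.inl ⟨2, by omega⟩) (Sum.inr w1) (Sum.inl ⟨3, by omega⟩)
          a2r a23 a3r.symm
          (by simp [Fin.ext_iff]) (by simp) (by simp [Fin.ext_iff])
      · exact tri (Sum.inl ⟨2, by omega⟩) (Sum.inr w1) (Sum.inl ⟨3, by omega⟩)
          a2r a23 a3r.symm
          (by simp) (by simp only [ne_eq, Sum.inr.injEq]; exact hww) (by simp)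
      · exact tri (Sum.inl ⟨2, by omega⟩) (Sum.inr w1) (Sum.inl ⟨3, by omega⟩)
          a2r a23 a3r.symm
          (by simp [Fin.ext_iff]) (by simp) (by simp [Fin.ext_iff])
  · push_neg at hx
    obtain ⟨h1, h2, h3⟩ := hx
    exact tri (Sum.inl ⟨0, by omega⟩) (Sum.inr w0) (Sum.inl ⟨1, by omega⟩)
      a0r a01 a1r.symm (Ne.symm h1) (Ne.symm h2) (Ne.symm h3)
end OddCyc

end AuxOddCyc

/-- For the odd cycle `C_{2n+1}` (`n ≥ 1`), which is
critically 3-chromatic, there exists `W` such that the expansion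
`C_{2n+1}[W]` is critically 4-chromatic. -/
theorem oddCycle_expansion_critical (n : ℕ) (hn : 1 ≤ n) :
    ∃ W : Set (Fin (2 * n + 1)),
      CriticallyChromatic (expansion (SimpleGraph.cycleGraph (2 * n + 1)) W) 4 := by
  refine ⟨OddCyc.Wset n, ?_, ?_⟩
  · exact chromNum_eq_of (OddCyc.col4 hn) (OddCyc.not_col3 hn)
  · intro v
    exact chromNum_eq_of (OddCyc.del_col3 hn v) (OddCyc.del_not_col2 hn v)
end

section
/- Let G = C_{2n+1}^c be the complement of the odd cycle on 2n+1 vertices with n ≥ 2 (a critically (n+1)-chromatic graph). Then there exists a subset W ⊆ V_G such that the expansion G[W] is a critically (n+2)-chromatic graph. -/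
open SimpleGraph MvPolynomial

namespace OddAntihole

lemma cyc_adj_iff {N : ℕ} (hN : 5 ≤ N) (u v : Fin N) :
    (cycleGraph N).Adj u v ↔
      (u.val = v.val + 1 ∨ v.val = u.val + 1 ∨ (u.val = 0 ∧ v.val + 1 = N) ∨
        (v.val = 0 ∧ u.val + 1 = N)) := by
  have key : ∀ a b : Fin N,
      ((a - b).val = 1 ↔ (a.val = b.val + 1 ∨ (b.val + 1 = N ∧ a.val = 0))) := by
    intro a b
    have ha := a.isLt; have hb := b.isLt
    rw [Fin.sub_def]
    simp only []
    rcases Nat.lt_or_ge (N - b.val + a.val) N with h | h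
    · rw [Nat.mod_eq_of_lt h]; omega
    · rw [Nat.mod_eq_sub_mod h, Nat.mod_eq_of_lt (by omega)]; omega
  rw [cycleGraph_adj', key, key]
  omega

def pr {V : Type*} {W : Set V} : V ⊕ W → V := Sum.elim id (↑·)

lemma exp_adj {V : Type*} {H : SimpleGraph V} {W : Set V} (u v : V ⊕ W) :
    (expansion Hᶜ W).Adj u v ↔ u ≠ v ∧ ¬ H.Adj (pr u) (pr v) := by
  cases u with
  | inl a => cases v with
    | inl b =>
      simp only [expansion, fromRel_adj, compl_adj, ne_eq, Sum.inl.injEq, pr, Sum.elim_inl, id]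
      have := H.adj_comm a b
      have := H.irrefl (v := a)
      tauto
    | inr w =>
      simp only [expansion, fromRel_adj, compl_adj, ne_eq, pr, Sum.elim_inl, Sum.elim_inr, id,
        reduceCtorEq, not_false_iff, true_and, or_false]
      rcases eq_or_ne a (w : V) with h | h
      · subst h; have := H.irrefl (v := (w : V)); tauto
      · tauto
  | inr w => cases v with
    | inl b =>
      simp only [expansion, fromRel_adj, compl_adj, ne_eq, pr, Sum.elim_inl, Sum.elim_inr, id,
        reduceCtorEq, not_false_iff, true_and, false_or]
      have := H.adj_comm (w : V) b
      rcases eq_or_ne b (w : V) with h | h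
      · subst h; have := H.irrefl (v := (w : V)); tauto
      · tauto
    | inr w' =>
      simp only [expansion, fromRel_adj, compl_adj, ne_eq, pr, Sum.elim_inr, Sum.inr.injEq]
      have hco : (w = w') ↔ ((w : V) = (w' : V)) := Subtype.ext_iff
      have := H.adj_comm (w : V) (w' : V)
      tauto

lemma card_le_of_colorable {V : Type*} [Fintype V] {H : SimpleGraph V} {m : ℕ}
    (hH : ∀ u v w : V, u ≠ v → u ≠ w → v ≠ w → H.Adj u v ∨ H.Adj u w ∨ H.Adj v w)
    (h : H.Colorable m) : Fintype.card V ≤ 2 * m := by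
  classical
  obtain ⟨C⟩ := h
  have hfib : ∀ c : Fin m, (Finset.univ.filter fun x => C x = c).card ≤ 2 := by
    intro c
    by_contra hlt
    push_neg at hlt
    set s := Finset.univ.filter fun x => C x = c with hs
    have hpos : 0 < s.card := by omega
    obtain ⟨a, ha⟩ := Finset.card_pos.mp hpos
    have h2 : 0 < (s.erase a).card := by
      rw [Finset.card_erase_of_mem ha]; omega
    obtain ⟨b, hb⟩ := Finset.card_pos.mp h2
    have h3 : 0 < ((s.erase a).erase b).card := by
      rw [Finset.card_erase_of_mem hb, Finset.card_erase_of_mem ha]; omega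
    obtain ⟨d, hd⟩ := Finset.card_pos.mp h3
    have hba : b ≠ a := Finset.ne_of_mem_erase hb
    have hdb : d ≠ b := Finset.ne_of_mem_erase hd
    have hda : d ≠ a := Finset.ne_of_mem_erase (Finset.mem_of_mem_erase hd)
    have hbs : b ∈ s := Finset.mem_of_mem_erase hb
    have hds : d ∈ s := Finset.mem_of_mem_erase (Finset.mem_of_mem_erase hd)
    have hca : C a = c := (Finset.mem_filter.mp ha).2
    have hcb : C b = c := (Finset.mem_filter.mp hbs).2
    have hcd : C d = c := (Finset.mem_filter.mp hds).2
    rcases hH a b d (Ne.symm hba) (Ne.symm hda) (Ne.symm hdb) with hadj | hadj | hadj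
    · exact C.valid hadj (by rw [hca, hcb])
    · exact C.valid hadj (by rw [hca, hcd])
    · exact C.valid hadj (by rw [hcb, hcd])
  calc Fintype.card V
      = ∑ c : Fin m, (Finset.univ.filter fun x => C x = c).card :=
        Finset.card_eq_sum_card_fiberwise (fun x _ => Finset.mem_univ (C x))
    _ ≤ ∑ _c : Fin m, 2 := Finset.sum_le_sum (fun c _ => hfib c)
    _ = 2 * m := by simp [mul_comm]

lemma chromNum_spec {V : Type*} (H : SimpleGraph V) (m : ℕ) (h1 : H.Colorable m)
    (h2 : ∀ k, H.Colorable k → m ≤ k) : sInf {k | H.Colorable k} = m :=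
  le_antisymm (Nat.sInf_le h1) (le_csInf ⟨m, h1⟩ h2)

lemma colorable_of_fun {V : Type*} (H : SimpleGraph V) (m : ℕ) (C : V → ℕ)
    (hb : ∀ x, C x < m) (hp : ∀ u v, H.Adj u v → C u ≠ C v) : H.Colorable m :=
  ⟨Coloring.mk (fun x => ⟨C x, hb x⟩) (fun h => Fin.ne_of_val_ne (hp _ _ h))⟩

lemma colorable_induce_of_fun {V : Type*} (H : SimpleGraph V) (s : Set V) (m : ℕ) (C : V → ℕ)
    (hb : ∀ x ∈ s, C x < m)
    (hp : ∀ u v, u ∈ s → v ∈ s → H.Adj u v → C u ≠ C v) : (H.induce s).Colorable m :=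
  ⟨Coloring.mk (fun x => ⟨C x.val, hb _ x.prop⟩)
    (fun {u v} h => Fin.ne_of_val_ne (hp _ _ u.prop v.prop (by simpa using h)))⟩

section params

variable {n : ℕ}

local notation "N" => 2*n+1
local notation "W₀" => ({0, 1} : Set (Fin (2*n+1)))

lemma val1 (hn : 2 ≤ n) : ((1 : Fin N) : ℕ) = 1 := by
  have h : ((1 : Fin N) : ℕ) = 1 % (2*n+1) := rfl
  rw [Nat.mod_eq_of_lt (by omega)] at h
  exact h

lemma val0 : ((0 : Fin N) : ℕ) = 0 := rfl

lemma wval (hn : 2 ≤ n) (w : W₀) : (w : Fin N).val = 0 ∨ (w : Fin N).val = 1 := by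
  have hw := w.prop
  simp only [Set.mem_insert_iff, Set.mem_singleton_iff] at hw
  rcases hw with h | h
  · left; rw [h, val0]
  · right; rw [h, val1 hn]

lemma alpha2 (hn : 2 ≤ n) (u v w : Fin N ⊕ W₀) (huv : u ≠ v) (huw : u ≠ w) (hvw : v ≠ w) :
    (expansion (cycleGraph N)ᶜ W₀).Adj u v ∨ (expansion (cycleGraph N)ᶜ W₀).Adj u w ∨
      (expansion (cycleGraph N)ᶜ W₀).Adj v w := by
  by_contra hc
  push_neg at hc
  obtain ⟨h1, h2, h3⟩ := hc
  simp only [exp_adj, not_and, not_not] at h1 h2 h3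
  have a1 := h1 huv
  have a2 := h2 huw
  have a3 := h3 hvw
  rw [cyc_adj_iff (by omega)] at a1 a2 a3
  have b1 := (pr u).isLt
  have b2 := (pr v).isLt
  have b3 := (pr w).isLt
  omega

lemma card_VV (hn : 2 ≤ n) : Fintype.card (Fin N ⊕ W₀) = 2*n+3 := by
  classical
  rw [Fintype.card_sum, Fintype.card_fin]
  have h01 : (0 : Fin N) ≠ 1 := by
    have := val1 hn
    have h0 := val0 (n := n)
    intro h
    rw [Fin.ext_iff] at h
    omega
  rw [Set.card_insert _ (by simp [h01])]
  simp

lemma lower_full (hn : 2 ≤ n) (k : ℕ) (hk : (expansion (cycleGraph N)ᶜ W₀).Colorable k) :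
    n + 2 ≤ k := by
  classical
  have := card_le_of_colorable (fun u v w => alpha2 hn u v w) hk
  rw [card_VV hn] at this
  omega

lemma lower_del (hn : 2 ≤ n) (x : Fin N ⊕ W₀) (k : ℕ)
    (hk : ((expansion (cycleGraph N)ᶜ W₀).induce ({x}ᶜ : Set (Fin N ⊕ W₀))).Colorable k) :
    n + 1 ≤ k := by
  classical
  have halpha : ∀ u v w : ({x}ᶜ : Set (Fin N ⊕ W₀)), u ≠ v → u ≠ w → v ≠ w →
      ((expansion (cycleGraph N)ᶜ W₀).induce ({x}ᶜ : Set (Fin N ⊕ W₀))).Adj u v ∨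
      ((expansion (cycleGraph N)ᶜ W₀).induce ({x}ᶜ : Set (Fin N ⊕ W₀))).Adj u w ∨
      ((expansion (cycleGraph N)ᶜ W₀).induce ({x}ᶜ : Set (Fin N ⊕ W₀))).Adj v w := by
    intro u v w huv huw hvw
    have := alpha2 hn u.val v.val w.val (Subtype.coe_injective.ne huv)
      (Subtype.coe_injective.ne huw) (Subtype.coe_injective.ne hvw)
    simpa using this
  have hcard : Fintype.card ({x}ᶜ : Set (Fin N ⊕ W₀)) = 2*n+2 := by
    rw [Fintype.card_compl_set, card_VV hn]
    simp
  have := card_le_of_colorable halpha hk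
  rw [hcard] at this
  omega

lemma inl_ne {a b : Fin N} (h : (Sum.inl a : Fin N ⊕ W₀) ≠ Sum.inl b) : a.val ≠ b.val :=
  fun hv => h (by rw [Sum.inl.injEq]; exact Fin.ext hv)

lemma inr_ne {w w' : W₀} (h : (Sum.inr w : Fin N ⊕ W₀) ≠ Sum.inr w') :
    (w : Fin N).val ≠ (w' : Fin N).val :=
  fun hv => h (by rw [Sum.inr.injEq]; exact Subtype.ext (Fin.ext hv))

lemma upper_full (hn : 2 ≤ n) : (expansion (cycleGraph N)ᶜ W₀).Colorable (n+2) := by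
  apply colorable_of_fun _ (n+2)
    (Sum.elim (fun k => if k.val ≤ 1 then 0 else k.val / 2 + 1) (fun _ => 1))
  · intro x
    rcases x with k | w
    · have := k.isLt
      simp only [Sum.elim_inl]
      split_ifs <;> omega
    · simp only [Sum.elim_inr]; omega
  · intro u v hadj
    rw [exp_adj] at hadj
    obtain ⟨hne, hnadj⟩ := hadj
    rw [cyc_adj_iff (by omega)] at hnadj
    rcases u with a | w <;> rcases v with b | w' <;>
      simp only [pr, Sum.elim_inl, Sum.elim_inr, id] at hnadj ⊢
    · have hab := inl_ne hne
      have := a.isLt; have := b.isLt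
      split_ifs <;> omega
    · split_ifs <;> omega
    · split_ifs <;> omega
    · have hww := inr_ne hne
      have := wval hn w; have := wval hn w'
      omega

lemma colorable_del_of_fun (x : Fin N ⊕ W₀) (m : ℕ) (C : Fin N ⊕ W₀ → ℕ)
    (hb : ∀ y, y ≠ x → C y < m)
    (hp : ∀ u v, u ≠ x → v ≠ x → (expansion (cycleGraph N)ᶜ W₀).Adj u v → C u ≠ C v) :
    ((expansion (cycleGraph N)ᶜ W₀).induce ({x}ᶜ : Set (Fin N ⊕ W₀))).Colorable m := by
  apply colorable_induce_of_fun _ _ m C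
  · intro y hy; exact hb y (by simpa using hy)
  · intro u v hu hv; exact hp u v (by simpa using hu) (by simpa using hv)

lemma upper_del (hn : 2 ≤ n) (x : Fin N ⊕ W₀) :
    ((expansion (cycleGraph N)ᶜ W₀).induce ({x}ᶜ : Set (Fin N ⊕ W₀))).Colorable (n+1) := by
  have hNval : ∀ k : Fin N, k.val < 2*n+1 := fun k => k.isLt
  rcases x with t | t
  · -- removed vertex is an original vertex inl t
    rcases Nat.lt_or_ge t.val 2 with ht2 | ht2
    · rcases Nat.lt_or_ge t.val 1 with ht01 | ht01
      · -- t.val = 0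
        have ht : t.val = 0 := by omega
        apply colorable_del_of_fun _ (n+1)
          (Sum.elim (fun k => if k.val = 1 then 0 else if k.val = 2 then 1 else (k.val - 3)/2 + 2)
            (fun w => if (w : Fin N).val = 0 then 0 else 1))
        · intro y _
          rcases y with k | w
          · have := hNval k
            simp only [Sum.elim_inl]
            split_ifs <;> omega
          · simp only [Sum.elim_inr]
            split_ifs <;> omega
        · intro u v hu hv hadj
          rw [exp_adj] at hadj
          obtain ⟨hne, hnadj⟩ := hadj
          rw [cyc_adj_iff (by omega)] at hnadj
          rcases u with a | w <;> rcases v with b | w' <;>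
            simp only [pr, Sum.elim_inl, Sum.elim_inr, id] at hnadj ⊢
          · have hab := inl_ne hne
            have hat : a.val ≠ t.val := inl_ne hu
            have hbt : b.val ≠ t.val := inl_ne hv
            have := hNval a; have := hNval b
            split_ifs <;> omega
          · have hat : a.val ≠ t.val := inl_ne hu
            have := wval hn w'; have := hNval a
            split_ifs <;> omega
          · have hbt : b.val ≠ t.val := inl_ne hv
            have := wval hn w; have := hNval b
            split_ifs <;> omega
          · have hww := inr_ne hne
            have := wval hn w; have := wval hn w'
            split_ifs <;> omega
      · -- t.val = 1
        have ht : t.val = 1 := by omega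
        apply colorable_del_of_fun _ (n+1)
          (Sum.elim (fun k => if k.val = 0 then 0 else if k.val = 2*n then 1 else k.val/2 + 1)
            (fun w => if (w : Fin N).val = 1 then 0 else 1))
        · intro y _
          rcases y with k | w
          · have := hNval k
            simp only [Sum.elim_inl]
            split_ifs <;> omega
          · simp only [Sum.elim_inr]
            split_ifs <;> omega
        · intro u v hu hv hadj
          rw [exp_adj] at hadj
          obtain ⟨hne, hnadj⟩ := hadj
          rw [cyc_adj_iff (by omega)] at hnadj
          rcases u with a | w <;> rcases v with b | w' <;>
            simp only [pr, Sum.elim_inl, Sum.elim_inr, id] at hnadj ⊢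
          · have hab := inl_ne hne
            have hat : a.val ≠ t.val := inl_ne hu
            have hbt : b.val ≠ t.val := inl_ne hv
            have := hNval a; have := hNval b
            split_ifs <;> omega
          · have hat : a.val ≠ t.val := inl_ne hu
            have := wval hn w'; have := hNval a
            split_ifs <;> omega
          · have hbt : b.val ≠ t.val := inl_ne hv
            have := wval hn w; have := hNval b
            split_ifs <;> omega
          · have hww := inr_ne hne
            have := wval hn w; have := wval hn w'
            split_ifs <;> omega
    · -- 2 ≤ t.val
      rcases Nat.even_or_odd t.val with he | ho
      · -- t.val even
        have hpar : t.val % 2 = 0 := Nat.even_iff.mp he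
        apply colorable_del_of_fun _ (n+1)
          (Sum.elim (fun k => if k.val ≤ 1 then 0 else
              if k.val < t.val then k.val/2 + 1 else (k.val - 1)/2 + 1)
            (fun _ => 1))
        · intro y _
          rcases y with k | w
          · have := hNval k; have := hNval t
            simp only [Sum.elim_inl]
            split_ifs <;> omega
          · simp only [Sum.elim_inr]; omega
        · intro u v hu hv hadj
          rw [exp_adj] at hadj
          obtain ⟨hne, hnadj⟩ := hadj
          rw [cyc_adj_iff (by omega)] at hnadj
          rcases u with a | w <;> rcases v with b | w' <;>
            simp only [pr, Sum.elim_inl, Sum.elim_inr, id] at hnadj ⊢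
          · have hab := inl_ne hne
            have hat : a.val ≠ t.val := inl_ne hu
            have hbt : b.val ≠ t.val := inl_ne hv
            have := hNval a; have := hNval b; have := hNval t
            split_ifs <;> omega
          · have hat : a.val ≠ t.val := inl_ne hu
            have := hNval a; have := hNval t
            split_ifs <;> omega
          · have hbt : b.val ≠ t.val := inl_ne hv
            have := hNval b; have := hNval t
            split_ifs <;> omega
          · have hww := inr_ne hne
            have := wval hn w; have := wval hn w'
            omega
      · -- t.val odd
        have hpar : t.val % 2 = 1 := Nat.odd_iff.mp ho
        apply colorable_del_of_fun _ (n+1)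
          (Sum.elim (fun k => if k.val = 0 ∨ k.val = 2*n then 0 else
              if k.val ≤ 2 then 2 else
              if k.val < t.val then (k.val + 3)/2 else (k.val + 2)/2)
            (fun _ => 1))
        · intro y _
          rcases y with k | w
          · have := hNval k; have := hNval t
            simp only [Sum.elim_inl]
            split_ifs <;> omega
          · simp only [Sum.elim_inr]; omega
        · intro u v hu hv hadj
          rw [exp_adj] at hadj
          obtain ⟨hne, hnadj⟩ := hadj
          rw [cyc_adj_iff (by omega)] at hnadj
          rcases u with a | w <;> rcases v with b | w' <;>
            simp only [pr, Sum.elim_inl, Sum.elim_inr, id] at hnadj ⊢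
          · have hab := inl_ne hne
            have hat : a.val ≠ t.val := inl_ne hu
            have hbt : b.val ≠ t.val := inl_ne hv
            have := hNval a; have := hNval b; have := hNval t
            split_ifs <;> omega
          · have hat : a.val ≠ t.val := inl_ne hu
            have := hNval a; have := hNval t
            split_ifs <;> omega
          · have hbt : b.val ≠ t.val := inl_ne hv
            have := hNval b; have := hNval t
            split_ifs <;> omega
          · have hww := inr_ne hne
            have := wval hn w; have := wval hn w'
            omega
  · -- removed vertex is a copy inr t
    rcases wval hn t with ht | ht
    · -- t.val = 0
      apply colorable_del_of_fun _ (n+1)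
        (Sum.elim (fun k => if k.val = 0 then 0 else if k.val ≤ 2 then 1 else (k.val - 3)/2 + 2)
          (fun _ => 0))
      · intro y _
        rcases y with k | w
        · have := hNval k
          simp only [Sum.elim_inl]
          split_ifs <;> omega
        · simp only [Sum.elim_inr]; omega
      · intro u v hu hv hadj
        rw [exp_adj] at hadj
        obtain ⟨hne, hnadj⟩ := hadj
        rw [cyc_adj_iff (by omega)] at hnadj
        rcases u with a | w <;> rcases v with b | w' <;>
          simp only [pr, Sum.elim_inl, Sum.elim_inr, id] at hnadj ⊢
        · have hab := inl_ne hne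
          have := hNval a; have := hNval b
          split_ifs <;> omega
        · have hwt : (w' : Fin N).val ≠ (t : Fin N).val := inr_ne hv
          have := wval hn w'; have := hNval a
          split_ifs <;> omega
        · have hwt : (w : Fin N).val ≠ (t : Fin N).val := inr_ne hu
          have := wval hn w; have := hNval b
          split_ifs <;> omega
        · have hww := inr_ne hne
          have h1 : (w : Fin N).val ≠ (t : Fin N).val := inr_ne hu
          have h2 : (w' : Fin N).val ≠ (t : Fin N).val := inr_ne hv
          have := wval hn w; have := wval hn w'
          omega
    · -- t.val = 1
      apply colorable_del_of_fun _ (n+1)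
        (Sum.elim (fun k => if k.val = 1 then 0 else
            if k.val = 0 ∨ k.val = 2*n then 1 else k.val/2 + 1)
          (fun _ => 0))
      · intro y _
        rcases y with k | w
        · have := hNval k
          simp only [Sum.elim_inl]
          split_ifs <;> omega
        · simp only [Sum.elim_inr]; omega
      · intro u v hu hv hadj
        rw [exp_adj] at hadj
        obtain ⟨hne, hnadj⟩ := hadj
        rw [cyc_adj_iff (by omega)] at hnadj
        rcases u with a | w <;> rcases v with b | w' <;>
          simp only [pr, Sum.elim_inl, Sum.elim_inr, id] at hnadj ⊢
        · have hab := inl_ne hne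
          have := hNval a; have := hNval b
          split_ifs <;> omega
        · have hwt : (w' : Fin N).val ≠ (t : Fin N).val := inr_ne hv
          have := wval hn w'; have := hNval a
          split_ifs <;> omega
        · have hwt : (w : Fin N).val ≠ (t : Fin N).val := inr_ne hu
          have := wval hn w; have := hNval b
          split_ifs <;> omega
        · have hww := inr_ne hne
          have h1 : (w : Fin N).val ≠ (t : Fin N).val := inr_ne hu
          have h2 : (w' : Fin N).val ≠ (t : Fin N).val := inr_ne hv
          have := wval hn w; have := wval hn w'
          omega

end params

end OddAntihole



/-- For the complement of the odd cycle `C_{2n+1}` (`n ≥ 2`),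
which is critically `(n+1)`-chromatic, there exists `W` such that the expansion
`C_{2n+1}^c[W]` is critically `(n+2)`-chromatic. -/
theorem oddAntihole_expansion_critical (n : ℕ) (hn : 2 ≤ n) :
    ∃ W : Set (Fin (2 * n + 1)),
      CriticallyChromatic (expansion (SimpleGraph.cycleGraph (2 * n + 1))ᶜ W) (n + 2) := by
  refine ⟨({0, 1} : Set (Fin (2 * n + 1))), ?_, ?_⟩
  · exact OddAntihole.chromNum_spec _ _ (OddAntihole.upper_full hn)
      (fun k => OddAntihole.lower_full hn k)
  · intro v
    have h := OddAntihole.chromNum_spec _ (n + 1) (OddAntihole.upper_del hn v)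
      (fun k => OddAntihole.lower_del hn v k)
    show chromNum _ = n + 2 - 1
    unfold chromNum
    rw [h]
    omega
end

section
/- Let C be the cycle on the vertices {x_1,...,x_{2r+1}} for some r ≥ 1, and let W = {x_2, x_4, ..., x_{2r}}. Then the expansion C[W] satisfies χ(C[W]) = 4 = χ(C) + 1. -/
open SimpleGraph MvPolynomial

section Aux

lemma chromNum_eq {V : Type*} (G : SimpleGraph V) (s : ℕ) (h1 : G.Colorable s)
    (h2 : ¬ G.Colorable (s - 1)) : chromNum G = s := by
  have hmem : s ∈ {m | G.Colorable m} := h1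
  apply le_antisymm (Nat.sInf_le hmem)
  apply le_csInf ⟨s, hmem⟩
  intro m hm
  by_contra hlt
  exact h2 (SimpleGraph.Colorable.mono (by omega) hm)

/-- Adjacency in the cycle from value arithmetic. -/
lemma cyc_adj {n : ℕ} (a b : Fin (n + 1))
    (h : b.val = a.val + 1 ∨ (a.val = n ∧ b.val = 0 ∧ 0 < n)) :
    (cycleGraph (n + 1)).Adj a b := by
  rw [SimpleGraph.cycleGraph_adj']
  right
  rw [Fin.sub_def]
  have ha := a.isLt
  have hb := b.isLt
  simp only
  rcases h with h | ⟨h1, h2, h3⟩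
  · have : n + 1 - a.val + b.val = n + 1 + 1 := by omega
    rw [this, Nat.add_mod_left, Nat.mod_eq_of_lt (by omega)]
  · have : n + 1 - a.val + b.val = 1 := by omega
    rw [this, Nat.mod_eq_of_lt (by omega)]

/-- Characterization of cycle adjacency on values. -/
lemma cyc_adj_val {n : ℕ} (a b : Fin (n + 1)) (h : (cycleGraph (n + 1)).Adj a b) :
    b.val = a.val + 1 ∨ a.val = b.val + 1 ∨ (a.val = n ∧ b.val = 0) ∨ (b.val = n ∧ a.val = 0) := by
  rw [SimpleGraph.cycleGraph_adj'] at h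
  have ha := a.isLt
  have hb := b.isLt
  rcases h with h | h <;> rw [Fin.sub_def] at h <;> simp only at h
  · -- (n+1 - b + a) % (n+1) = 1
    rcases Nat.lt_or_ge (n + 1 - b.val + a.val) (n + 1) with hlt | hge
    · rw [Nat.mod_eq_of_lt hlt] at h; omega
    · rw [Nat.mod_eq_sub_mod hge, Nat.mod_eq_of_lt (by omega)] at h; omega
  · rcases Nat.lt_or_ge (n + 1 - a.val + b.val) (n + 1) with hlt | hge
    · rw [Nat.mod_eq_of_lt hlt] at h; omega
    · rw [Nat.mod_eq_sub_mod hge, Nat.mod_eq_of_lt (by omega)] at h; omega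

variable {V : Type*} {G : SimpleGraph V} {W : Set V}

lemma expansion_adj_inl_inl {u v : V} (h : G.Adj u v) :
    (expansion G W).Adj (Sum.inl u) (Sum.inl v) := by
  rw [expansion, SimpleGraph.fromRel_adj]
  exact ⟨by simp [h.ne], Or.inl h⟩

lemma expansion_adj_inl_inr {u : V} {w : W} (h : G.Adj u (w : V) ∨ u = (w : V)) :
    (expansion G W).Adj (Sum.inl u) (Sum.inr w) := by
  rw [expansion, SimpleGraph.fromRel_adj]
  exact ⟨by simp, Or.inl h⟩

lemma expansion_adj_cases {a b : V ⊕ W} (h : (expansion G W).Adj a b) :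
    (∃ u v : V, a = Sum.inl u ∧ b = Sum.inl v ∧ G.Adj u v) ∨
    (∃ u : V, ∃ w : W, (a = Sum.inl u ∧ b = Sum.inr w ∨ a = Sum.inr w ∧ b = Sum.inl u)) ∨
    (∃ w w' : W, a = Sum.inr w ∧ b = Sum.inr w' ∧ G.Adj (w : V) (w' : V)) := by
  rw [expansion, SimpleGraph.fromRel_adj] at h
  obtain ⟨hne, h⟩ := h
  rcases a with u | w <;> rcases b with v | w'
  · rcases h with h | h
    · exact Or.inl ⟨u, v, rfl, rfl, h⟩
    · exact Or.inl ⟨u, v, rfl, rfl, h.symm⟩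
  · exact Or.inr (Or.inl ⟨u, w', Or.inl ⟨rfl, rfl⟩⟩)
  · exact Or.inr (Or.inl ⟨v, w, Or.inr ⟨rfl, rfl⟩⟩)
  · rcases h with h | h
    · exact Or.inr (Or.inr ⟨w, w', rfl, rfl, h⟩)
    · exact Or.inr (Or.inr ⟨w, w', rfl, rfl, h.symm⟩)

end Aux

section Cycle

lemma cycle_colorable (r : ℕ) (hr : 1 ≤ r) : (cycleGraph (2 * r + 1)).Colorable 3 := by
  refine ⟨SimpleGraph.Coloring.mk
    (fun v => (⟨if v.val = 2 * r then 2 else v.val % 2, by split_ifs <;> omega⟩ : Fin 3)) ?_⟩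
  intro u v hadj huv
  have h := cyc_adj_val (n := 2 * r) u v hadj
  have ha := u.isLt
  have hb := v.isLt
  rw [Fin.mk.injEq] at huv
  split_ifs at huv <;> omega

lemma cycle_not_colorable_2 (r : ℕ) (hr : 1 ≤ r) : ¬ (cycleGraph (2 * r + 1)).Colorable 2 := by
  rintro ⟨f⟩
  have key : ∀ a b c : Fin 2, a ≠ b → c ≠ b → a = c := by decide
  have step : ∀ k, ∀ hk : k + 1 ≤ 2 * r,
      f ⟨k + 1, by omega⟩ ≠ f ⟨k, by omega⟩ := by
    intro k hk
    exact (f.valid (cyc_adj _ _ (Or.inl rfl))).symm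
  have main : ∀ t, ∀ ht : 2 * t ≤ 2 * r, f ⟨2 * t, by omega⟩ = f ⟨0, by omega⟩ := by
    intro t
    induction t with
    | zero => intro _; rfl
    | succ m ih =>
      intro ht
      have hix : (⟨2 * (m + 1), by omega⟩ : Fin (2 * r + 1)) = ⟨2 * m + 2, by omega⟩ :=
        Fin.ext (by simp; ring)
      rw [hix]
      have h1 : f ⟨2 * m + 2, by omega⟩ ≠ f ⟨2 * m + 1, by omega⟩ := step (2 * m + 1) (by omega)
      have h2 : f ⟨2 * m, by omega⟩ ≠ f ⟨2 * m + 1, by omega⟩ := (step (2 * m) (by omega)).symm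
      rw [key _ _ _ h1 h2]
      exact ih (by omega)
  have h2r : f ⟨2 * r, by omega⟩ = f ⟨0, by omega⟩ := main r le_rfl
  exact f.valid (cyc_adj ⟨2 * r, by omega⟩ ⟨0, by omega⟩ (Or.inr ⟨rfl, rfl, by omega⟩)) h2r

end Cycle

section Expansion

variable (r : ℕ)

abbrev Wset (r : ℕ) : Set (Fin (2 * r + 1)) :=
  {v : Fin (2 * r + 1) | ∃ j : ℕ, 1 ≤ j ∧ j ≤ r ∧ (v : ℕ) = 2 * j - 1}

lemma mem_Wset_odd {r : ℕ} {v : Fin (2 * r + 1)} (h : v ∈ Wset r) :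
    v.val % 2 = 1 := by
  obtain ⟨j, h1, h2, h3⟩ := h
  omega

lemma expansion_colorable (hr : 1 ≤ r) :
    (expansion (cycleGraph (2 * r + 1)) (Wset r)).Colorable 4 := by
  classical
  refine ⟨SimpleGraph.Coloring.mk (fun a =>
    match a with
    | Sum.inl v => (⟨if v.val = 2 * r then 1 else if v.val % 2 = 1 then 2 else 0,
        by split_ifs <;> omega⟩ : Fin 4)
    | Sum.inr _ => (⟨3, by omega⟩ : Fin 4)) ?_⟩
  intro a b hadj
  rcases expansion_adj_cases hadj with ⟨u, v, rfl, rfl, h⟩ | ⟨u, w, h | h⟩ |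
      ⟨w, w', rfl, rfl, h⟩
  · have hv := cyc_adj_val (n := 2 * r) u v h
    have ha := u.isLt
    have hb := v.isLt
    simp only
    intro huv
    rw [Fin.mk.injEq] at huv
    split_ifs at huv <;> omega
  · obtain ⟨rfl, rfl⟩ := h
    simp only
    intro huv
    rw [Fin.mk.injEq] at huv
    split_ifs at huv <;> omega
  · obtain ⟨rfl, rfl⟩ := h
    simp only
    intro huv
    rw [Fin.mk.injEq] at huv
    split_ifs at huv <;> omega
  · exfalso
    have h1 := mem_Wset_odd w.2
    have h2 := mem_Wset_odd w'.2
    have := cyc_adj_val (n := 2 * r) (w : Fin (2 * r + 1)) (w' : Fin (2 * r + 1)) h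
    have ha := (w : Fin (2 * r + 1)).isLt
    have hb := (w' : Fin (2 * r + 1)).isLt
    omega

lemma expansion_not_colorable_3 (hr : 1 ≤ r) :
    ¬ (expansion (cycleGraph (2 * r + 1)) (Wset r)).Colorable 3 := by
  rintro ⟨f⟩
  have key : ∀ a b c d : Fin 3, c ≠ d → a ≠ c → a ≠ d → b ≠ c → b ≠ d → a = b := by decide
  -- every even-indexed vertex gets the color of vertex 0
  have main : ∀ k, ∀ hk : k ≤ r,
      f (Sum.inl ⟨2 * k, by omega⟩) = f (Sum.inl ⟨0, by omega⟩) := by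
    intro k
    induction k with
    | zero => intro _; rfl
    | succ m ih =>
      intro hk
      -- the W vertex with value 2*m+1
      have hwmem : (⟨2 * m + 1, by omega⟩ : Fin (2 * r + 1)) ∈ Wset r :=
        ⟨m + 1, by omega, by omega, by simp; omega⟩
      set w : (Wset r) := ⟨⟨2 * m + 1, by omega⟩, hwmem⟩ with hw
      -- edges
      have e1 : (expansion (cycleGraph (2 * r + 1)) (Wset r)).Adj
          (Sum.inl ⟨2 * m, by omega⟩) (Sum.inl (w : Fin (2 * r + 1))) :=
        expansion_adj_inl_inl (cyc_adj _ _ (Or.inl rfl))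
      have e2 : (expansion (cycleGraph (2 * r + 1)) (Wset r)).Adj
          (Sum.inl ⟨2 * m, by omega⟩) (Sum.inr w) :=
        expansion_adj_inl_inr (Or.inl (cyc_adj _ _ (Or.inl rfl)))
      have e3 : (expansion (cycleGraph (2 * r + 1)) (Wset r)).Adj
          (Sum.inl ⟨2 * (m + 1), by omega⟩) (Sum.inl (w : Fin (2 * r + 1))) :=
        ((expansion_adj_inl_inl (cyc_adj _ _ (Or.inl (by simp [hw]; omega))))).symm
      have e4 : (expansion (cycleGraph (2 * r + 1)) (Wset r)).Adj
          (Sum.inl ⟨2 * (m + 1), by omega⟩) (Sum.inr w) := by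
        apply expansion_adj_inl_inr
        exact Or.inl ((cyc_adj (w : Fin (2 * r + 1)) _ (Or.inl (by simp [hw]; omega))).symm)
      have e5 : (expansion (cycleGraph (2 * r + 1)) (Wset r)).Adj
          (Sum.inl (w : Fin (2 * r + 1))) (Sum.inr w) :=
        expansion_adj_inl_inr (Or.inr rfl)
      have := key (f (Sum.inl ⟨2 * (m + 1), by omega⟩)) (f (Sum.inl ⟨2 * m, by omega⟩))
        (f (Sum.inl (w : Fin (2 * r + 1)))) (f (Sum.inr w))
        (f.valid e5) (f.valid e3) (f.valid e4) (f.valid e1) (f.valid e2)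
      rw [this]
      exact ih (by omega)
  have h2r := main r le_rfl
  have hedge : (expansion (cycleGraph (2 * r + 1)) (Wset r)).Adj
      (Sum.inl ⟨2 * r, by omega⟩) (Sum.inl ⟨0, by omega⟩) :=
    expansion_adj_inl_inl (cyc_adj _ _ (Or.inr ⟨rfl, rfl, by omega⟩))
  exact f.valid hedge h2r

end Expansion

/-- Let `C` be the cycle on vertices `x_1, …, x_{2r+1}`
(vertex `x_i` corresponding to `i - 1 : Fin (2r+1)`), `r ≥ 1`, and let
`W = {x_2, x_4, …, x_{2r}}`. Then `χ(C[W]) = 4 = χ(C) + 1`. -/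
theorem oddCycle_expansion_evens (r : ℕ) (hr : 1 ≤ r) :
    chromNum (expansion (SimpleGraph.cycleGraph (2 * r + 1))
        {v : Fin (2 * r + 1) | ∃ j : ℕ, 1 ≤ j ∧ j ≤ r ∧ (v : ℕ) = 2 * j - 1}) = 4 ∧
      4 = chromNum (SimpleGraph.cycleGraph (2 * r + 1)) + 1 := by
  constructor
  · exact chromNum_eq _ 4 (expansion_colorable r hr) (expansion_not_colorable_3 r hr)
  · rw [chromNum_eq _ 3 (cycle_colorable r hr) (cycle_not_colorable_2 r hr)]
end

section
/- Let G be a finite simple graph on vertices {x_1,...,x_n} with cover ideal J = J(G) ⊆ R = k[x_1,...,x_n]. Then: (a) for every edge {x_i, x_j} of G, the prime (x_i, x_j) belongs to Ass(R/J^3); and (b) for every odd r and every subset {x_{i_1},...,x_{i_r}} of the vertices whose induced subgraph in G is an odd cycle, the prime (x_{i_1},...,x_{i_r}) belongs to Ass(R/J^3). -/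
open SimpleGraph MvPolynomial

namespace AuxFHV


variable {k : Type} [Field k] {n : ℕ}

/-- product of variables over a multiset -/
noncomputable def XM (M : Multiset (Fin n)) : MvPolynomial (Fin n) k :=
  (M.map X).prod

lemma XM_add (A B : Multiset (Fin n)) : (XM (A + B) : MvPolynomial (Fin n) k) = XM A * XM B := by
  simp [XM, Multiset.prod_add]

lemma XM_eq_monomial (M : Multiset (Fin n)) :
    (XM M : MvPolynomial (Fin n) k) = monomial M.toFinsupp 1 := by
  induction M using Multiset.induction_on with
  | empty => simp [XM]
  | cons a s ih =>
    rw [show a ::ₘ s = {a} + s from (Multiset.singleton_add a s).symm, XM_add, ih,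
      Multiset.toFinsupp_add, Multiset.toFinsupp_singleton]
    rw [show (XM {a} : MvPolynomial (Fin n) k) = X a by simp [XM], X,
      monomial_mul, one_mul]

lemma mem_coverIdeal {G : SimpleGraph (Fin n)} {f : MvPolynomial (Fin n) k} :
    f ∈ coverIdeal k G ↔ ∀ i j, G.Adj i j → f ∈ Ideal.span {X i, X j} := by
  simp [coverIdeal, Submodule.mem_iInf]

lemma XM_mem_coverIdeal {G : SimpleGraph (Fin n)} {M : Multiset (Fin n)}
    (h : ∀ ⦃u v⦄, G.Adj u v → u ∈ M ∨ v ∈ M) : (XM M : MvPolynomial (Fin n) k) ∈ coverIdeal k G := by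
  rw [mem_coverIdeal]
  intro i j hadj
  have hmem : X i ∈ (Ideal.span {X i, X j} : Ideal (MvPolynomial (Fin n) k)) ∧
      X j ∈ (Ideal.span {X i, X j} : Ideal (MvPolynomial (Fin n) k)) :=
    ⟨Ideal.subset_span (Set.mem_insert _ _),
     Ideal.subset_span (Set.mem_insert_iff.2 (Or.inr rfl))⟩
  rcases h hadj with hw | hw
  · rw [XM, ← Multiset.prod_map_erase (f := X) hw]
    exact Ideal.mul_mem_right _ _ hmem.1
  · rw [XM, ← Multiset.prod_map_erase (f := X) hw]
    exact Ideal.mul_mem_right _ _ hmem.2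

/-- the ideal of polynomials all of whose monomials have `S`-degree `≥ d`. -/
noncomputable def wIdeal (S : Finset (Fin n)) (d : ℕ) : Ideal (MvPolynomial (Fin n) k) where
  carrier := {f | ∀ m ∈ f.support, d ≤ ∑ s ∈ S, m s}
  add_mem' := by
    intro a b ha hb m hm
    rcases Finset.mem_union.1 (MvPolynomial.support_add hm) with h | h
    · exact ha m h
    · exact hb m h
  zero_mem' := by simp
  smul_mem' := by
    intro r f hf m hm
    rw [smul_eq_mul] at hm
    obtain ⟨a, ha, b, hb, rfl⟩ := Finset.mem_add.1 (MvPolynomial.support_mul r f hm)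
    calc d ≤ ∑ s ∈ S, b s := hf b hb
    _ ≤ ∑ s ∈ S, (a + b) s := Finset.sum_le_sum (fun s _ => by simp)

lemma mem_wIdeal {S : Finset (Fin n)} {d : ℕ} {f : MvPolynomial (Fin n) k} :
    f ∈ wIdeal S d ↔ ∀ m ∈ f.support, d ≤ ∑ s ∈ S, m s := Iff.rfl

lemma wIdeal_mul (S : Finset (Fin n)) (a b : ℕ) :
    (wIdeal S a : Ideal (MvPolynomial (Fin n) k)) * wIdeal S b ≤ wIdeal S (a + b) := by
  rw [Ideal.mul_le]
  intro f hf g hg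
  intro m hm
  obtain ⟨mf, hmf, mg, hmg, rfl⟩ := Finset.mem_add.1 (MvPolynomial.support_mul f g hm)
  have := add_le_add (hf mf hmf) (hg mg hmg)
  calc a + b ≤ (∑ s ∈ S, mf s) + ∑ s ∈ S, mg s := this
  _ = ∑ s ∈ S, (mf + mg) s := by rw [← Finset.sum_add_distrib]; rfl


lemma mem_span_pair_iff {i j : Fin n} {f : MvPolynomial (Fin n) k} :
    f ∈ Ideal.span {(X i : MvPolynomial (Fin n) k), X j} ↔
      ∀ m ∈ f.support, m i ≠ 0 ∨ m j ≠ 0 := by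
  have : ({(X i : MvPolynomial (Fin n) k), X j} : Set _) = X '' {i, j} := by
    rw [Set.image_pair]
  rw [this, mem_ideal_span_X_image]
  simp

lemma sub_aeval_mem (S : Finset (Fin n)) (f : MvPolynomial (Fin n) k) :
    f - aeval (fun i => if i ∈ S then 0 else X i) f ∈
      Ideal.span ((fun i => (X i : MvPolynomial (Fin n) k)) '' ↑S) := by
  induction f using MvPolynomial.induction_on with
  | C a => simp
  | add p q hp hq =>
    have := Ideal.add_mem _ hp hq
    rw [map_add]
    convert this using 1
    ring
  | mul_X p i hp =>
    rw [map_mul, aeval_X]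
    by_cases hi : i ∈ S
    · rw [if_pos hi, mul_zero, sub_zero]
      exact Ideal.mul_mem_left _ _ (Ideal.subset_span ⟨i, by simpa using hi, rfl⟩)
    · rw [if_neg hi]
      have := Ideal.mul_mem_right (X i) _ hp
      convert this using 1
      ring

lemma spanX_isPrime (S : Finset (Fin n)) :
    (Ideal.span ((fun i => (X i : MvPolynomial (Fin n) k)) '' ↑S)).IsPrime := by
  have hker : RingHom.ker ((aeval (R := k) (fun i => if i ∈ S then 0 else (X i : MvPolynomial (Fin n) k))).toRingHom) =
      Ideal.span ((fun i => (X i : MvPolynomial (Fin n) k)) '' ↑S) := by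
    apply le_antisymm
    · intro f hf
      have h0 : aeval (fun i => if i ∈ S then 0 else X i) f = 0 := hf
      have := sub_aeval_mem (k := k) S f
      rwa [h0, sub_zero] at this
    · rw [Ideal.span_le]
      rintro _ ⟨i, hi, rfl⟩
      have : aeval (R := k) (fun i => if i ∈ S then 0 else (X i : MvPolynomial (Fin n) k)) (X i) = 0 := by
        rw [aeval_X, if_pos (by simpa using hi)]
      exact this
  rw [← hker]
  exact RingHom.ker_isPrime _

lemma coverIdeal_le_wIdeal {G : SimpleGraph (Fin n)} {S : Finset (Fin n)} {c : ℕ}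
    (hbound : ∀ A : Finset (Fin n), A ⊆ S →
      (∀ ⦃u v⦄, G.Adj u v → u ∈ S → v ∈ S → u ∈ A ∨ v ∈ A) → c ≤ A.card) :
    coverIdeal k G ≤ wIdeal S c := by
  intro f hf
  rw [mem_wIdeal]
  intro m hm
  set A : Finset (Fin n) := S.filter (fun s => m s ≠ 0) with hA
  have h1 : c ≤ A.card := by
    apply hbound A (Finset.filter_subset _ _)
    intro u v hadj hu hv
    have := (mem_span_pair_iff.1 ((mem_coverIdeal.1 hf) u v hadj)) m hm
    rcases this with h | h
    · exact Or.inl (Finset.mem_filter.2 ⟨hu, h⟩)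
    · exact Or.inr (Finset.mem_filter.2 ⟨hv, h⟩)
  calc c ≤ A.card := h1
  _ = ∑ s ∈ A, 1 := by simp
  _ ≤ ∑ s ∈ A, m s := Finset.sum_le_sum (fun s hs => by
      have := (Finset.mem_filter.1 hs).2; omega)
  _ ≤ ∑ s ∈ S, m s := Finset.sum_le_sum_of_subset (Finset.filter_subset _ _)

lemma coverIdeal_pow3_le_wIdeal {G : SimpleGraph (Fin n)} {S : Finset (Fin n)} {c : ℕ}
    (h : coverIdeal k G ≤ wIdeal S c) :
    (coverIdeal k G) ^ 3 ≤ wIdeal S (3 * c) := by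
  have h2 : (coverIdeal k G) ^ 2 ≤ wIdeal S (c + c) := by
    rw [sq]
    exact le_trans (Ideal.mul_mono h h) (wIdeal_mul S c c)
  have h3 : (coverIdeal k G) ^ 3 ≤ wIdeal S (c + c + c) := by
    rw [pow_succ]
    exact le_trans (Ideal.mul_mono h2 h) (wIdeal_mul S (c + c) c)
  have : 3 * c = c + c + c := by ring
  rwa [this]

lemma core (G : SimpleGraph (Fin n)) (S : Finset (Fin n)) (c : ℕ) (t : Multiset (Fin n))
    (htS : ∀ x ∈ t, x ∈ S)
    (htcard : Multiset.card t < 3 * c)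
    (hbound : ∀ A : Finset (Fin n), A ⊆ S →
       (∀ ⦃u v⦄, G.Adj u v → u ∈ S → v ∈ S → u ∈ A ∨ v ∈ A) → c ≤ A.card)
    (hwit : ∀ s ∈ S, ∃ C1 C2 C3 : Finset (Fin n),
       (∀ ⦃u v⦄, G.Adj u v → u ∈ S → v ∈ S → u ∈ C1 ∨ v ∈ C1) ∧
       (∀ ⦃u v⦄, G.Adj u v → u ∈ S → v ∈ S → u ∈ C2 ∨ v ∈ C2) ∧
       (∀ ⦃u v⦄, G.Adj u v → u ∈ S → v ∈ S → u ∈ C3 ∨ v ∈ C3) ∧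
       s ::ₘ t = C1.val + C2.val + C3.val) :
    Ideal.span ((fun i => (X i : MvPolynomial (Fin n) k)) '' ↑S) ∈
      associatedPrimes (MvPolynomial (Fin n) k)
        (MvPolynomial (Fin n) k ⧸ (coverIdeal k G) ^ 3) := by
  classical
  set R := MvPolynomial (Fin n) k
  set J : Ideal R := coverIdeal k G with hJ
  set off : Multiset (Fin n) := (Finset.univ \ S).val with hoff
  set T : R := XM (t + (off + off + off)) with hT
  set P : Ideal R := Ideal.span ((fun i => (X i : R)) '' ↑S) with hP
  -- key membership fact
  have hcovmem : ∀ (C : Finset (Fin n)),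
      (∀ ⦃u v⦄, G.Adj u v → u ∈ S → v ∈ S → u ∈ C ∨ v ∈ C) →
      (XM (C.val + off) : R) ∈ J := by
    intro C hC
    apply XM_mem_coverIdeal
    intro u v hadj
    by_cases hu : u ∈ S
    · by_cases hv : v ∈ S
      · rcases hC hadj hu hv with h | h
        · exact Or.inl (Multiset.mem_add.2 (Or.inl h))
        · exact Or.inr (Multiset.mem_add.2 (Or.inl h))
      · exact Or.inr (Multiset.mem_add.2 (Or.inr (Finset.mem_val.mpr (by simp [hv]))))
    · exact Or.inl (Multiset.mem_add.2 (Or.inr (Finset.mem_val.mpr (by simp [hu]))))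
  -- forward inclusion: P annihilates
  have hPann : ∀ s ∈ S, (X s : R) * T ∈ J ^ 3 := by
    intro s hs
    obtain ⟨C1, C2, C3, h1, h2, h3, heq⟩ := hwit s hs
    have hXT : (X s : R) * T = XM (C1.val + off) * XM (C2.val + off) * XM (C3.val + off) := by
      have hXs : (X s : R) = XM {s} := by simp [XM]
      rw [hXs, hT, ← XM_add]
      rw [← XM_add, ← XM_add]
      congr 1
      rw [show ({s} : Multiset (Fin n)) + (t + (off + off + off)) =
        (s ::ₘ t) + (off + off + off) by
          rw [Multiset.singleton_add, Multiset.cons_add]]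
      rw [heq]
      abel
    rw [hXT]
    have hJ2 : XM (C1.val + off) * XM (C2.val + off) ∈ J ^ 2 := by
      rw [sq]
      exact Ideal.mul_mem_mul (hcovmem C1 h1) (hcovmem C2 h2)
    rw [pow_succ]
    exact Ideal.mul_mem_mul hJ2 (hcovmem C3 h3)
  -- T's S-degree
  have hdegT : ∑ s ∈ S, (t + (off + off + off)).toFinsupp s = Multiset.card t := by
    have hcnt : ∀ s ∈ S, (t + (off + off + off)).toFinsupp s = t.count s := by
      intro s hs
      rw [Multiset.toFinsupp_apply, Multiset.count_add]
      have hc0 : off.count s = 0 := by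
        rw [Multiset.count_eq_zero]
        intro hmem
        exact (Finset.mem_sdiff.1 (Finset.mem_val.mp hmem)).2 hs
      rw [Multiset.count_add, Multiset.count_add, hc0]
      omega
    rw [Finset.sum_congr rfl hcnt]
    rw [← Finset.sum_subset (show t.toFinset ⊆ S by intro x hx; exact htS x (Multiset.mem_toFinset.1 hx))
      (fun x _ hx => Multiset.count_eq_zero_of_notMem (fun h => hx (Multiset.mem_toFinset.2 h)))]
    exact Multiset.toFinset_sum_count_eq t
  -- reverse inclusion
  have hrev : ∀ r : R, r * T ∈ J ^ 3 → r ∈ P := by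
    intro r hr
    by_contra hrP
    rw [hP] at hrP
    have himg : ((fun i => (X i : R)) '' ↑S) = X '' ↑S := rfl
    rw [himg, mem_ideal_span_X_image] at hrP
    push_neg at hrP
    obtain ⟨m₀, hm₀, hm₀S⟩ := hrP
    have hle : J ^ 3 ≤ wIdeal S (3 * c) :=
      coverIdeal_pow3_le_wIdeal (coverIdeal_le_wIdeal hbound)
    have hw := (mem_wIdeal.1 (hle hr))
    have hcoeff : (r * T).coeff (m₀ + (t + (off + off + off)).toFinsupp) = r.coeff m₀ := by
      rw [hT, XM_eq_monomial, coeff_mul_monomial, mul_one]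
    have hsupp : m₀ + (t + (off + off + off)).toFinsupp ∈ (r * T).support := by
      rw [mem_support_iff, hcoeff]
      exact mem_support_iff.1 hm₀
    have := hw _ hsupp
    have hsum : ∑ s ∈ S, (m₀ + (t + (off + off + off)).toFinsupp) s = Multiset.card t := by
      have : ∀ s ∈ S, (m₀ + (t + (off + off + off)).toFinsupp) s
          = (t + (off + off + off)).toFinsupp s := by
        intro s hs
        simp [hm₀S s hs]
      rw [Finset.sum_congr rfl this, hdegT]
    omega
  -- assemble
  refine ⟨spanX_isPrime S, ⟨Ideal.Quotient.mk (J ^ 3) T, ?_⟩⟩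
  suffices hann : P = (⊥ : Submodule R (R ⧸ J ^ 3)).colon {Ideal.Quotient.mk (J ^ 3) T} by
    rw [← hann]; exact (spanX_isPrime S).radical.symm
  ext r
  rw [Submodule.mem_colon_singleton, Submodule.mem_bot]
  have hsmul : r • (Ideal.Quotient.mk (J ^ 3) T) = Ideal.Quotient.mk (J ^ 3) (r * T) := rfl
  rw [hsmul, Ideal.Quotient.eq_zero_iff_mem]
  constructor
  · intro hrP
    -- r ∈ P → r * T ∈ J^3
    have : P ≤ (J ^ 3).colon {T} := by
      rw [hP, Ideal.span_le]
      rintro _ ⟨s, hs, rfl⟩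
      rw [SetLike.mem_coe, Submodule.mem_colon_singleton, smul_eq_mul]
      exact hPann s (by simpa using hs)
    have := this hrP
    rwa [Submodule.mem_colon_singleton, smul_eq_mul] at this
  · exact hrev r
lemma partA (G : SimpleGraph (Fin n)) (i j : Fin n) (hadj : G.Adj i j) :
    Ideal.span {(MvPolynomial.X i : MvPolynomial (Fin n) k), MvPolynomial.X j} ∈
      associatedPrimes (MvPolynomial (Fin n) k)
        (MvPolynomial (Fin n) k ⧸ (coverIdeal k G) ^ 3) := by
  classical
  have hne : i ≠ j := hadj.ne
  have himg : ((fun l => (X l : MvPolynomial (Fin n) k)) '' ↑({i, j} : Finset (Fin n)))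
      = {(X i : MvPolynomial (Fin n) k), X j} := by
    rw [Finset.coe_insert, Finset.coe_singleton, Set.image_pair]
  have hcov : ∀ (C : Finset (Fin n)), i ∈ C ∨ j ∈ C →
      (∀ ⦃u v⦄, G.Adj u v → u ∈ ({i, j} : Finset (Fin n)) → v ∈ ({i, j} : Finset (Fin n)) →
        u ∈ C ∨ v ∈ C) := by
    intro C hC u v huv hu hv
    have hu' := Finset.mem_insert.1 hu
    have hv' := Finset.mem_insert.1 hv
    rw [Finset.mem_singleton] at hu' hv'
    have hne2 : u ≠ v := huv.ne
    rcases hC with h | h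
    · rcases hu' with rfl | rfl
      · exact Or.inl h
      · rcases hv' with rfl | rfl
        · exact Or.inr h
        · exact absurd rfl hne2
    · rcases hu' with rfl | rfl
      · rcases hv' with rfl | rfl
        · exact absurd rfl hne2
        · exact Or.inr h
      · exact Or.inl h
  have := core (k := k) G {i, j} 1 (i ::ₘ {j})
    (by intro x hx; rcases Multiset.mem_cons.1 hx with rfl | hx
        · exact Finset.mem_insert_self _ _
        · rw [Multiset.mem_singleton] at hx; subst hx; exact Finset.mem_insert.2 (Or.inr (Finset.mem_singleton_self _)))
    (by simp)
    (by intro A _ hA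
        have := hA hadj (Finset.mem_insert_self _ _)
          (Finset.mem_insert.2 (Or.inr (Finset.mem_singleton_self _)))
        have : A.Nonempty := by rcases this with h | h; exacts [⟨i, h⟩, ⟨j, h⟩]
        exact Finset.card_pos.2 this)
    (by intro s hs
        have hs' := Finset.mem_insert.1 hs
        rw [Finset.mem_singleton] at hs'
        rcases hs' with rfl | rfl
        · refine ⟨{s}, {s}, {j}, hcov _ (Or.inl (Finset.mem_singleton_self _)),
            hcov _ (Or.inl (Finset.mem_singleton_self _)),
            hcov _ (Or.inr (Finset.mem_singleton_self _)), ?_⟩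
          simp only [Finset.singleton_val]
          rw [Multiset.singleton_add, Multiset.cons_add, Multiset.singleton_add]
        · refine ⟨{s}, {s}, {i}, hcov _ (Or.inr (Finset.mem_singleton_self _)),
            hcov _ (Or.inr (Finset.mem_singleton_self _)),
            hcov _ (Or.inl (Finset.mem_singleton_self _)), ?_⟩
          simp only [Finset.singleton_val]
          rw [Multiset.singleton_add, Multiset.cons_add, Multiset.singleton_add]
          rw [show (i ::ₘ ({s} : Multiset (Fin n))) = s ::ₘ {i} by
            rw [← Multiset.cons_zero s, Multiset.cons_swap, Multiset.cons_zero]])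
  rwa [himg] at this
lemma natpar {r km a b : ℕ} (h : r = 2*km+1) (ha : a < r) (hb : b = (1+a) % r) :
    (Even a ∨ Even b) ∧ (¬Even a ∨ b = 0 ∨ ¬Even b) := by
  have h1 : 1 + a ≤ r := by omega
  rcases lt_or_eq_of_le h1 with hlt | heq
  · rw [Nat.mod_eq_of_lt hlt] at hb
    subst hb
    simp only [Nat.even_iff]
    omega
  · rw [heq, Nat.mod_self] at hb
    subst hb
    exact ⟨Or.inr (by simp), Or.inr (Or.inl rfl)⟩

lemma finkey {r : ℕ} [NeZero r] (hr2 : 2 ≤ r) (p₁ p₂ : Fin r) (h : (p₂ - p₁).val = 1)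
    (q : Fin r) : (p₂ - q).val = (1 + (p₁ - q).val) % r := by
  have h1 : p₂ - q = (p₂ - p₁) + (p₁ - q) := (sub_add_sub_cancel _ _ _).symm
  rw [h1, Fin.val_add, h]

lemma fin_eq_add_one {r : ℕ} [NeZero r] (hr2 : 2 ≤ r) (p₁ p₂ : Fin r)
    (h : (p₂ - p₁).val = 1) : p₂.val = (1 + p₁.val) % r := by
  have := finkey hr2 p₁ p₂ h 0
  simpa using this

lemma adj_cons {r : ℕ} [NeZero r] (hr3 : 3 ≤ r) (y : Fin r) :
    (cycleGraph r).Adj y (y + 1) := by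
  rw [cycleGraph_adj']
  right
  rw [add_sub_cancel_left, Fin.val_one']
  exact Nat.mod_eq_of_lt (by omega)

lemma indep_card {r km : ℕ} [NeZero r] (h : r = 2*km+1) (h3 : 3 ≤ r) (I : Finset (Fin r))
    (hI : ∀ p₁ ∈ I, ∀ p₂ ∈ I, ¬ (cycleGraph r).Adj p₁ p₂) : I.card ≤ km := by
  classical
  have hdisj : Disjoint I (I.image (· + 1)) := by
    rw [Finset.disjoint_right]
    intro x hx hxI
    obtain ⟨y, hy, rfl⟩ := Finset.mem_image.1 hx
    exact hI y hy (y + 1) hxI (adj_cons h3 y)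
  have hinj : Function.Injective (fun x : Fin r => x + 1) := add_left_injective 1
  have hcard : I.card + I.card ≤ r := by
    have := Finset.card_union_of_disjoint hdisj
    have hle : (I ∪ I.image (· + 1)).card ≤ r := by
      have := Finset.card_le_univ (I ∪ I.image (· + 1))
      simpa using this
    rw [this, Finset.card_image_of_injective _ hinj] at hle
    omega
  omega


section covers
variable {r km : ℕ} [NeZero r]

/-- even offsets from `q` cover the cycle -/
lemma cov_even (h : r = 2*km+1) (q : Fin r) {p₁ p₂ : Fin r} (hadj : (cycleGraph r).Adj p₁ p₂) :
    Even ((p₁ - q).val) ∨ Even ((p₂ - q).val) := by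
  have key : ∀ a b : Fin r, (b - a).val = 1 →
      (Even ((a - q).val) ∨ Even ((b - q).val)) := by
    intro a b hab
    exact (natpar h (Fin.is_lt _) (finkey (by omega) a b hab q)).1
  rcases cycleGraph_adj'.1 hadj with hd | hd
  · exact (key p₂ p₁ hd).symm
  · exact key p₁ p₂ hd

/-- `q` together with odd offsets from `q` cover the cycle -/
lemma cov_odd (h : r = 2*km+1) (q : Fin r) {p₁ p₂ : Fin r} (hadj : (cycleGraph r).Adj p₁ p₂) :
    (p₁ = q ∨ ¬ Even ((p₁ - q).val)) ∨ (p₂ = q ∨ ¬ Even ((p₂ - q).val)) := by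
  have key : ∀ a b : Fin r, (b - a).val = 1 →
      ((a = q ∨ ¬ Even ((a - q).val)) ∨ (b = q ∨ ¬ Even ((b - q).val))) := by
    intro a b hab
    rcases (natpar h (Fin.is_lt _) (finkey (by omega) a b hab q)).2 with hh | hh | hh
    · exact Or.inl (Or.inr hh)
    · refine Or.inr (Or.inl ?_)
      have : b - q = 0 := by
        apply Fin.ext
        simpa using hh
      have := sub_eq_zero.1 this
      exact this
    · exact Or.inr (Or.inr hh)
  rcases cycleGraph_adj'.1 hadj with hd | hd
  · exact (key p₂ p₁ hd).symm
  · exact key p₁ p₂ hd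

/-- even values cover the cycle -/
lemma cov_evenval (h : r = 2*km+1) {p₁ p₂ : Fin r} (hadj : (cycleGraph r).Adj p₁ p₂) :
    Even (p₁.val) ∨ Even (p₂.val) := by
  have key : ∀ a b : Fin r, (b - a).val = 1 → (Even a.val ∨ Even b.val) := by
    intro a b hab
    exact (natpar h (Fin.is_lt _) (fin_eq_add_one (by omega) a b hab)).1
  rcases cycleGraph_adj'.1 hadj with hd | hd
  · exact (key p₂ p₁ hd).symm
  · exact key p₁ p₂ hd

/-- count of evens -/
lemma evens_card (h : r = 2*km+1) :
    (Finset.univ.filter (fun p : Fin r => Even p.val)).card ≤ km + 1 := by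
  classical
  rw [show km + 1 = (Finset.range (km+1)).card from (Finset.card_range _).symm]
  apply Finset.card_le_card_of_injOn (fun p => p.val / 2)
  · intro p hp
    have hev := (Finset.mem_filter.1 hp).2
    have hlt := p.is_lt
    rw [Nat.even_iff] at hev
    rw [Finset.mem_coe, Finset.mem_range]
    dsimp only
    omega
  · intro p₁ hp₁ p₂ hp₂ heq
    have h1 := (Finset.mem_filter.1 hp₁).2
    have h2 := (Finset.mem_filter.1 hp₂).2
    rw [Nat.even_iff] at h1 h2
    apply Fin.ext
    simp only at heq
    omega

end covers

variable {k : Type} [Field k] {n : ℕ}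

lemma partB (G : SimpleGraph (Fin n)) (S : Finset (Fin n)) (hodd : Odd S.card)
    (h3 : 3 ≤ S.card)
    (he : Nonempty (G.induce (S : Set (Fin n)) ≃g SimpleGraph.cycleGraph S.card)) :
    Ideal.span ((fun i => (MvPolynomial.X i : MvPolynomial (Fin n) k)) '' (S : Set (Fin n))) ∈
      associatedPrimes (MvPolynomial (Fin n) k)
        (MvPolynomial (Fin n) k ⧸ (coverIdeal k G) ^ 3) := by
  classical
  obtain ⟨e⟩ := he
  obtain ⟨km, hkm⟩ := hodd
  set r := S.card with hr
  haveI : NeZero r := ⟨by omega⟩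
  set v : Fin r → Fin n := fun p => ((e.symm p : (S : Set (Fin n))) : Fin n) with hv
  have hvS : ∀ p, v p ∈ S := fun p => Finset.mem_coe.1 (e.symm p).2
  have hvinj : Function.Injective v := fun p p' hpp => by
    apply e.symm.injective
    exact Subtype.ext hpp
  have hsurj : ∀ s ∈ S, ∃ p, v p = s := by
    intro s hs
    refine ⟨e ⟨s, by simpa using hs⟩, ?_⟩
    simp [hv]
  have hAdj : ∀ p p' : Fin r, (cycleGraph r).Adj p p' ↔ G.Adj (v p) (v p') := by
    intro p p'
    rw [← e.symm.map_adj_iff]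
    rfl
  -- the fixed "evens" cover
  set FE : Finset (Fin r) := Finset.univ.filter (fun p : Fin r => Even p.val) with hFE
  have hmFE : ∀ p, p ∈ FE ↔ Even p.val := by
    intro p; rw [hFE, Finset.mem_filter]; simp
  set ES : Finset (Fin n) := FE.image v with hES
  set t : Multiset (Fin n) := S.val + ES.val with ht
  -- generic transfer of covers
  have htrans : ∀ (F : Finset (Fin r)),
      (∀ ⦃p₁ p₂ : Fin r⦄, (cycleGraph r).Adj p₁ p₂ → p₁ ∈ F ∨ p₂ ∈ F) →
      (∀ ⦃u w : Fin n⦄, G.Adj u w → u ∈ S → w ∈ S → u ∈ F.image v ∨ w ∈ F.image v) := by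
    intro F hF u w huw hu hw
    obtain ⟨p₁, rfl⟩ := hsurj u hu
    obtain ⟨p₂, rfl⟩ := hsurj w hw
    rcases hF ((hAdj p₁ p₂).2 huw) with hp | hp
    · exact Or.inl (Finset.mem_image_of_mem v hp)
    · exact Or.inr (Finset.mem_image_of_mem v hp)
  apply core G S (km + 1) t
  · intro x hx
    rcases Multiset.mem_add.1 hx with hx | hx
    · exact Finset.mem_val.mp hx
    · obtain ⟨p, _, rfl⟩ := Finset.mem_image.1 (Finset.mem_val.mp hx)
      exact hvS p
  · have hc : Multiset.card t = r + ES.card := by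
      rw [ht, Multiset.card_add]
      rfl
    have hES_card : ES.card ≤ km + 1 := by
      rw [hES]
      calc (FE.image v).card ≤ FE.card := Finset.card_image_le
      _ ≤ km + 1 := evens_card hkm
    omega
  · -- cover bound
    intro A hAS hA
    set A' : Finset (Fin r) := Finset.univ.filter (fun p => v p ∈ A) with hA'
    have hcardA : A'.card = A.card := by
      have himg : A'.image v = A := by
        ext s
        constructor
        · intro hs
          obtain ⟨p, hp, rfl⟩ := Finset.mem_image.1 hs
          exact (Finset.mem_filter.1 hp).2
        · intro hs
          obtain ⟨p, rfl⟩ := hsurj s (hAS hs)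
          exact Finset.mem_image_of_mem v (Finset.mem_filter.2 ⟨Finset.mem_univ _, hs⟩)
      rw [← himg, Finset.card_image_of_injective _ hvinj]
    set I : Finset (Fin r) := Finset.univ \ A' with hI
    have hindep : ∀ p₁ ∈ I, ∀ p₂ ∈ I, ¬ (cycleGraph r).Adj p₁ p₂ := by
      intro p₁ hp₁ p₂ hp₂ hadj
      have := hA ((hAdj p₁ p₂).1 hadj) (hvS p₁) (hvS p₂)
      rcases this with hmem | hmem
      · exact (Finset.mem_sdiff.1 hp₁).2 (Finset.mem_filter.2 ⟨Finset.mem_univ _, hmem⟩)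
      · exact (Finset.mem_sdiff.1 hp₂).2 (Finset.mem_filter.2 ⟨Finset.mem_univ _, hmem⟩)
    have hIcard : I.card ≤ km := indep_card hkm (by omega) I hindep
    have hIc : I.card = r - A'.card := by
      rw [hI, Finset.card_sdiff_of_subset (Finset.subset_univ _)]
      simp
    have hA'le : A'.card ≤ r := by
      have := Finset.card_le_univ A'
      simpa using this
    omega
  · -- witness
    intro s hs
    obtain ⟨q, rfl⟩ := hsurj s hs
    set F1 : Finset (Fin r) := Finset.univ.filter (fun p => Even ((p - q).val)) with hF1
    set F2 : Finset (Fin r) := Finset.univ.filter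
      (fun p => p = q ∨ ¬ Even ((p - q).val)) with hF2
    have hmF1 : ∀ p, p ∈ F1 ↔ Even ((p - q).val) := by
      intro p; rw [hF1, Finset.mem_filter]; simp
    have hmF2 : ∀ p, p ∈ F2 ↔ (p = q ∨ ¬ Even ((p - q).val)) := by
      intro p; rw [hF2, Finset.mem_filter]; simp
    refine ⟨F1.image v, F2.image v, ES, ?_, ?_, ?_, ?_⟩
    · apply htrans
      intro p₁ p₂ hadj
      rcases cov_even hkm q hadj with hp | hp
      · exact Or.inl ((hmF1 p₁).2 hp)
      · exact Or.inr ((hmF1 p₂).2 hp)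
    · apply htrans
      intro p₁ p₂ hadj
      rcases cov_odd hkm q hadj with hp | hp
      · exact Or.inl ((hmF2 p₁).2 hp)
      · exact Or.inr ((hmF2 p₂).2 hp)
    · rw [hES]
      apply htrans
      intro p₁ p₂ hadj
      rcases cov_evenval hkm hadj with hp | hp
      · exact Or.inl ((hmFE p₁).2 hp)
      · exact Or.inr ((hmFE p₂).2 hp)
    · -- multiset identity
      have hunion : (F1.image v) ∪ (F2.image v) = S := by
        rw [← Finset.image_union]
        have huniv : F1 ∪ F2 = Finset.univ := by
          ext p
          rw [Finset.mem_union, hmF1, hmF2]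
          constructor
          · intro _
            exact Finset.mem_univ _
          · intro _
            by_cases hp : Even ((p - q).val)
            · exact Or.inl hp
            · exact Or.inr (Or.inr hp)
        rw [huniv]
        ext s
        constructor
        · intro hsi
          obtain ⟨p, _, rfl⟩ := Finset.mem_image.1 hsi
          exact hvS p
        · intro hsS
          obtain ⟨p, rfl⟩ := hsurj s hsS
          exact Finset.mem_image_of_mem v (Finset.mem_univ p)
      have hinter : (F1.image v) ∩ (F2.image v) = {v q} := by
        rw [← Finset.image_inter _ _ hvinj]
        have : F1 ∩ F2 = {q} := by
          ext p
          rw [Finset.mem_inter, hmF1, hmF2, Finset.mem_singleton]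
          constructor
          · rintro ⟨h1, h2 | h2⟩
            · exact h2
            · exact absurd h1 h2
          · rintro rfl
            exact ⟨by simp, Or.inl rfl⟩
        rw [this, Finset.image_singleton]
      have hkey : (F1.image v).val + (F2.image v).val = v q ::ₘ S.val := by
        rw [← Multiset.union_add_inter (F1.image v).val (F2.image v).val]
        rw [← Finset.union_val, ← Finset.inter_val, hunion, hinter]
        rw [Finset.singleton_val, add_comm, Multiset.singleton_add]
      rw [ht, ← Multiset.cons_add, ← hkey]

end AuxFHV
/-- (a) For every edge `{x_i, x_j}` of `G`, the prime
`(x_i, x_j)` is an associated prime of `R/J³`; (b) for every odd `r` and every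
set of `r` vertices inducing an odd cycle in `G`, the corresponding prime
belongs to `Ass(R/J³)`. -/
theorem edges_and_odd_cycles_in_ass_cube {k : Type} [Field k] {n : ℕ}
    (G : SimpleGraph (Fin n)) :
    (∀ i j : Fin n, G.Adj i j →
      Ideal.span {(MvPolynomial.X i : MvPolynomial (Fin n) k), MvPolynomial.X j} ∈
        associatedPrimes (MvPolynomial (Fin n) k)
          (MvPolynomial (Fin n) k ⧸ (coverIdeal k G) ^ 3)) ∧
    (∀ S : Finset (Fin n), Odd S.card → 3 ≤ S.card →
      Nonempty (G.induce (S : Set (Fin n)) ≃g SimpleGraph.cycleGraph S.card) →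
      Ideal.span ((fun i => (MvPolynomial.X i : MvPolynomial (Fin n) k)) '' (S : Set (Fin n))) ∈
        associatedPrimes (MvPolynomial (Fin n) k)
          (MvPolynomial (Fin n) k ⧸ (coverIdeal k G) ^ 3)) := by
  constructor
  · intro i j hadj
    exact AuxFHV.partA G i j hadj
  · intro S hodd h3 he
    exact AuxFHV.partB G S hodd h3 he
end

section
/- Let G = C_9 be the cycle on vertices {x_1,...,x_9} and let W = {x_2, x_5, x_8}, a maximal independent set of G. Then the expansion G[W] satisfies χ(G[W]) = χ(G) = 3. -/
set_option maxRecDepth 20000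


open SimpleGraph MvPolynomial

lemma chromNum_eq_three {V : Type*} (G : SimpleGraph V) (h3 : G.Colorable 3)
    (h2 : ¬ G.Colorable 2) : chromNum G = 3 := by
  refine le_antisymm (Nat.sInf_le h3) (le_csInf ⟨3, h3⟩ ?_)
  intro m hm
  by_contra h
  push_neg at h
  exact h2 (hm.mono (by omega))

lemma c9_no2 : ¬ ∃ f : Fin 9 → Fin 2, ∀ u v, (cycleGraph 9).Adj u v → f u ≠ f v := by decide

lemma c9_not_colorable2 : ¬ (cycleGraph 9).Colorable 2 := by
  rintro ⟨C⟩
  exact c9_no2 ⟨C, fun u v h => C.valid h⟩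

lemma c9_colorable3 : (cycleGraph 9).Colorable 3 := by
  refine ⟨⟨![0,1,0,2,1,2,1,0,1], fun {u v} => ?_⟩⟩
  revert u v
  decide

lemma mem_W {x : Fin 9} : x ∈ ({(1 : Fin 9), 4, 7} : Set (Fin 9)) ↔ x = 1 ∨ x = 4 ∨ x = 7 := by
  simp [Set.mem_insert_iff]

lemma exp_not_colorable2 :
    ¬ (expansion (cycleGraph 9) {(1 : Fin 9), 4, 7}).Colorable 2 := by
  rintro ⟨C⟩
  refine c9_no2 ⟨fun i => C (Sum.inl i), fun u v h hne => ?_⟩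
  have : (expansion (cycleGraph 9) {(1 : Fin 9), 4, 7}).Adj (Sum.inl u) (Sum.inl v) := by
    refine ⟨by simpa using h.ne, Or.inl h⟩
  exact C.valid this hne

lemma exp_colorable3 :
    (expansion (cycleGraph 9) {(1 : Fin 9), 4, 7}).Colorable 3 := by
  classical
  have key0 : ∀ u v : Fin 9, (cycleGraph 9).Adj u v →
      (![0,1,0,2,1,2,1,0,1] : Fin 9 → Fin 3) u ≠ ![0,1,0,2,1,2,1,0,1] v := by decide
  have key1 : ∀ u x : Fin 9, (x = 1 ∨ x = 4 ∨ x = 7) →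
      ((cycleGraph 9).Adj u x ∨ u = x) →
      (![0,1,0,2,1,2,1,0,1] : Fin 9 → Fin 3) u ≠ (if x = 4 then 0 else 2) := by decide
  have key2 : ∀ x y : Fin 9, (x = 1 ∨ x = 4 ∨ x = 7) → (y = 1 ∨ y = 4 ∨ y = 7) →
      ¬ (cycleGraph 9).Adj x y := by decide
  refine ⟨⟨fun a => match a with
    | Sum.inl i => (![0,1,0,2,1,2,1,0,1] : Fin 9 → Fin 3) i
    | Sum.inr w => if (w : Fin 9) = 4 then 0 else 2, ?_⟩⟩
  rintro (u | ⟨x, hx⟩) (v | ⟨y, hy⟩) ⟨hne, hr⟩ <;> simp only [top_adj]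
  · exact key0 u v (hr.elim id fun h => h.symm)
  · exact key1 u y (mem_W.mp hy) (hr.elim id fun h => h.elim)
  · exact (key1 v x (mem_W.mp hx) (hr.elim (fun h => h.elim) id)).symm
  · exact absurd (hr.elim id fun h => h.symm) (key2 x y (mem_W.mp hx) (mem_W.mp hy))

lemma c9_maxindep : IsMaxIndepSet (SimpleGraph.cycleGraph 9) {(1 : Fin 9), 4, 7} := by
  constructor
  · intro u v hu hv
    rw [mem_W] at hu hv
    rcases hu with rfl | rfl | rfl <;> rcases hv with rfl | rfl | rfl <;> decide
  · intro W' hW' hsub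
    ext x
    refine ⟨fun h => hsub h, fun hx => ?_⟩
    by_contra hxW
    rw [mem_W] at hxW
    push_neg at hxW
    have key : ∀ x : Fin 9, ¬(x = 1 ∨ x = 4 ∨ x = 7) →
        ∃ w, (w = 1 ∨ w = 4 ∨ w = 7) ∧ (cycleGraph 9).Adj x w := by decide
    obtain ⟨w, hw, hadj⟩ := key x (by tauto)
    have hwW : w ∈ ({(1 : Fin 9), 4, 7} : Set (Fin 9)) := mem_W.mpr hw
    exact hW' hx (hsub hwW) hadj

/-- Let `G = C_9` be the cycle on vertices `x_1, …, x_9`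
(vertex `x_i` corresponding to `i - 1 : Fin 9`) and `W = {x_2, x_5, x_8}`,
a maximal independent set. Then `χ(G[W]) = χ(G) = 3`. -/
theorem c9_expansion_not_increasing :
    IsMaxIndepSet (SimpleGraph.cycleGraph 9) {(1 : Fin 9), 4, 7} ∧
    chromNum (expansion (SimpleGraph.cycleGraph 9) {(1 : Fin 9), 4, 7}) = 3 ∧
    chromNum (SimpleGraph.cycleGraph 9) = 3 := by
  exact ⟨c9_maxindep, chromNum_eq_three _ exp_colorable3 exp_not_colorable2,
    chromNum_eq_three _ c9_colorable3 c9_not_colorable2⟩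
end
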